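/- arXiv:2110.15304 — 4 statements merged into one kernel-verified Lean document; each statement's English description precedes it below -/
import Mathlib

section
/- Let d ∈ ℕ, p ∈ (0,∞), and suppose γ*(ℓ,c) < ∞. If α > (d/p)·γ*(ℓ,c), then the neural network approximation space A^α_{ℓ,c,p}([0,1]^d) embeds continuously into C([0,1]^d): every f ∈ A^α_{ℓ,c,p}([0,1]^d) has a continuous representative, and there is a constant C = C(d,p,α,ℓ,c) > 0 such that ‖f‖_{L^∞([0,1]^d)} ≤ C·‖f‖_{A^α_{ℓ,c,p}} for all f ∈ A^α_{ℓ,c,p}([0,1]^d). -/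
open MeasureTheory Filter
open scoped ENNReal NNReal Classical
open scoped Topology

noncomputable section

/-- The ReLU activation function. -/
def relu (x : ℝ) : ℝ := max 0 x

/-- A (ReLU) neural network with input dimension `d` and output dimension `1` is encoded by
its number of layers `L ≥ 1`, its widths `N` (with `N 0 = d` and `N L = 1`),
its matrices `A ℓ` and bias vectors `b ℓ` (only the values for `ℓ < L` are relevant). -/
structure NeuralNet (d : ℕ) where
  L : ℕ
  hL : 0 < L
  N : ℕ → ℕ
  hN0 : N 0 = d
  hNL : N L = 1
  A : ∀ ℓ : ℕ, Matrix (Fin (N (ℓ + 1))) (Fin (N ℓ)) ℝ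
  b : ∀ ℓ : ℕ, Fin (N (ℓ + 1)) → ℝ

namespace NeuralNet

variable {d : ℕ}

/-- The vector of values computed in the `k`-th layer, with ReLU applied after
each affine map. -/
def hidden (Φ : NeuralNet d) : (k : ℕ) → (Fin d → ℝ) → Fin (Φ.N k) → ℝ
  | 0, x => x ∘ Fin.cast Φ.hN0
  | k + 1, x => fun i => relu ((Φ.A k).mulVec (Φ.hidden k x) i + Φ.b k i)

/-- The realization `R_ρ Φ` of the network: the last affine map is applied
without the ReLU activation. -/
def realization (Φ : NeuralNet d) (x : Fin d → ℝ) : ℝ :=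
  ((Φ.A (Φ.L - 1)).mulVec (Φ.hidden (Φ.L - 1) x) + Φ.b (Φ.L - 1))
    (Fin.cast (show (1 : ℕ) = Φ.N (Φ.L - 1 + 1) by
      rw [Nat.sub_add_cancel Φ.hL, Φ.hNL]) 0)

/-- `W(Φ)`: the number of nonzero weights (entries of the matrices and bias vectors). -/
def weightCount (Φ : NeuralNet d) : ℕ :=
  ∑ ℓ ∈ Finset.range Φ.L,
    ((Finset.univ.filter fun ij : Fin (Φ.N (ℓ + 1)) × Fin (Φ.N ℓ) => Φ.A ℓ ij.1 ij.2 ≠ 0).card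
      + (Finset.univ.filter fun i : Fin (Φ.N (ℓ + 1)) => Φ.b ℓ i ≠ 0).card)

/-- `‖Φ‖_NN ≤ C`: all entries of all matrices and bias vectors are bounded by `C` in
absolute value. -/
def weightsBoundedBy (Φ : NeuralNet d) (C : ℝ≥0∞) : Prop :=
  ∀ ℓ < Φ.L, (∀ i j, ENNReal.ofReal |Φ.A ℓ i j| ≤ C) ∧ (∀ i, ENNReal.ofReal |Φ.b ℓ i| ≤ C)

end NeuralNet

/-- `Σ_n`: the set of realizations of networks with input dimension `d`, output dimension 1,
at most `n` nonzero weights, at most `ℓf n` layers, and weights bounded by `cf n`. -/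
def NNSet (d : ℕ) (ℓf : ℕ → ℕ∞) (cf : ℕ → ℝ≥0∞) (n : ℕ) : Set ((Fin d → ℝ) → ℝ) :=
  { F | ∃ Φ : NeuralNet d, F = Φ.realization ∧ Φ.weightCount ≤ n ∧
      (Φ.L : ℕ∞) ≤ ℓf n ∧ Φ.weightsBoundedBy (cf n) }

/-- The unit cube `[0,1]^d`. -/
def unitCube (d : ℕ) : Set (Fin d → ℝ) := Set.Icc 0 1

/-- `d_p(f, S)`: the `L^p(Ω)` distance of `f` to the set `S`. -/
def dLp (d : ℕ) (Ω : Set (Fin d → ℝ)) (p : ℝ≥0∞) (f : (Fin d → ℝ) → ℝ)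
    (S : Set ((Fin d → ℝ) → ℝ)) : ℝ≥0∞ :=
  ⨅ g ∈ S, eLpNorm (f - g) p (volume.restrict Ω)

/-- `Γ(f) = max (‖f‖_{L^p(Ω)}) (sup_{n ≥ 1} n^α d_p(f, Σ_n))`. -/
def Gamma (d : ℕ) (ℓf : ℕ → ℕ∞) (cf : ℕ → ℝ≥0∞) (Ω : Set (Fin d → ℝ)) (p : ℝ≥0∞) (α : ℝ)
    (f : (Fin d → ℝ) → ℝ) : ℝ≥0∞ :=
  max (eLpNorm f p (volume.restrict Ω))
    (⨆ n : ℕ, ((n + 1 : ℕ) : ℝ≥0∞) ^ α * dLp d Ω p f (NNSet d ℓf cf (n + 1)))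

/-- The approximation space quasi-norm `‖f‖_{A^α_{ℓ,c,p}(Ω)} = inf {θ > 0 : Γ(f/θ) ≤ 1}`,
with value `∞` (`sInf ∅`) if no such `θ` exists. -/
def ANorm (d : ℕ) (ℓf : ℕ → ℕ∞) (cf : ℕ → ℝ≥0∞) (Ω : Set (Fin d → ℝ)) (p : ℝ≥0∞) (α : ℝ)
    (f : (Fin d → ℝ) → ℝ) : ℝ≥0∞ :=
  sInf {t : ℝ≥0∞ | ∃ θ : ℝ, 0 < θ ∧ t = ENNReal.ofReal θ ∧
    Gamma d ℓf cf Ω p α (fun x => f x / θ) ≤ 1}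

/-- Membership in the approximation space `A^α_{ℓ,c,p}(Ω)`:
`f ∈ L^p(Ω)` and `‖f‖_{A^α_{ℓ,c,p}} < ∞`. -/
def MemA (d : ℕ) (ℓf : ℕ → ℕ∞) (cf : ℕ → ℝ≥0∞) (Ω : Set (Fin d → ℝ)) (p : ℝ≥0∞) (α : ℝ)
    (f : (Fin d → ℝ) → ℝ) : Prop :=
  MemLp f p (volume.restrict Ω) ∧ ANorm d ℓf cf Ω p α f < ⊤

/-- `ℓ* = sup_n ℓ(n)`. -/
def lstar (ℓf : ℕ → ℕ∞) : ℕ∞ := ⨆ n : ℕ, ℓf n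

/-- `γ*(ℓ,c)`. -/
def gammaStar (ℓf : ℕ → ℕ∞) (cf : ℕ → ℝ≥0∞) : ℝ≥0∞ :=
  sSup {t : ℝ≥0∞ | ∃ γ : ℝ, 0 ≤ γ ∧ t = ENNReal.ofReal γ ∧
    ∃ L : ℕ, 1 ≤ L ∧ (L : ℕ∞) ≤ lstar ℓf ∧
      0 < Filter.limsup
        (fun n : ℕ => cf n ^ L * (n : ℝ≥0∞) ^ (L / 2) / (n : ℝ≥0∞) ^ (γ : ℝ))
        Filter.atTop}

/-- `γ◇(ℓ,c)`. -/
def gammaDiamond (ℓf : ℕ → ℕ∞) (cf : ℕ → ℝ≥0∞) : ℝ≥0∞ :=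
  sInf {t : ℝ≥0∞ | ∃ γ : ℝ, 0 ≤ γ ∧ t = ENNReal.ofReal γ ∧
    ∃ C : ℝ, 0 < C ∧ ∀ n : ℕ, 1 ≤ n → ∀ L : ℕ, 1 ≤ L → (L : ℕ∞) ≤ lstar ℓf →
      cf n ^ L * (n : ℝ≥0∞) ^ (L / 2) ≤ ENNReal.ofReal C * (n : ℝ≥0∞) ^ (γ : ℝ)}

/-- The Hölder seminorm `Lip_β(f)` on the unit cube, with respect to the `ℓ∞` metric
(which is the metric of `Fin d → ℝ`), valued in `[0,∞]`. -/
def eLip (d : ℕ) (β : ℝ) (f : (Fin d → ℝ) → ℝ) : ℝ≥0∞ :=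
  ⨆ x ∈ unitCube d, ⨆ y ∈ unitCube d, ⨆ _ : x ≠ y,
    ENNReal.ofReal (|f x - f y| / dist x y ^ β)

/-- The supremum norm over the unit cube, valued in `[0,∞]`. -/
def supNormCube (d : ℕ) (f : (Fin d → ℝ) → ℝ) : ℝ≥0∞ :=
  ⨆ x ∈ unitCube d, ENNReal.ofReal |f x|

/-- The Hölder norm `‖f‖_{C^{0,β}} = ‖f‖_{L∞} + Lip_β(f)`, valued in `[0,∞]`. -/
def holderNorm (d : ℕ) (β : ℝ) (f : (Fin d → ℝ) → ℝ) : ℝ≥0∞ :=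
  supNormCube d f + eLip d β f

/-- `d/p`, interpreted as `0` when `p = ∞`. -/
def dOverP (d : ℕ) (p : ℝ≥0∞) : ℝ := if p = ⊤ then 0 else (d : ℝ) / p.toReal

/-- The function `ζ_{M'}(x) = max {0, 1 - M' * ∑ i, x i}`. -/
def zeta (d : ℕ) (M' : ℝ) (x : Fin d → ℝ) : ℝ := max 0 (1 - M' * ∑ i, x i)

/-- Piecewise constant interpolation of `f` on the tensor grid `{0, 1/n, …, n/n}^d`,
constant on the cells `(i_1/n, …, i_d/n) + [0, 1/n)^d`. -/
def pwConstGrid (d n : ℕ) (f : (Fin d → ℝ) → ℝ) (x : Fin d → ℝ) : ℝ :=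
  ∑ i : Fin d → Fin (n + 1),
    if ∀ j, ((i j : ℝ) / n ≤ x j ∧ x j < (i j : ℝ) / n + 1 / n) then
      f (fun j => (i j : ℝ) / n) else 0

/-- The piecewise constant interpolation operator `A_m^{pw-const}`,
using the grid with `n = ⌊m^{1/d}⌋ - 1`. -/
def pwConst (d m : ℕ) (f : (Fin d → ℝ) → ℝ) : (Fin d → ℝ) → ℝ :=
  pwConstGrid d (Nat.floor ((m : ℝ) ^ ((d : ℝ)⁻¹)) - 1) f


section Aux

lemma abs_relu_sub (a b : ℝ) : |relu a - relu b| ≤ |a - b| := by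
  simpa [relu, max_comm] using abs_max_sub_max_le_abs a b 0

lemma abs_mulVec_sub_le {m k : ℕ} (A : Matrix (Fin m) (Fin k) ℝ) (c : ℝ)
    (hA : ∀ i j, |A i j| ≤ c) (u v : Fin k → ℝ) (i : Fin m) :
    |A.mulVec u i - A.mulVec v i| ≤ c * ∑ j, |u j - v j| := by
  have h0 : A.mulVec u i - A.mulVec v i = ∑ j, A i j * (u j - v j) := by
    simp [Matrix.mulVec, dotProduct, ← Finset.sum_sub_distrib, mul_sub]
  rw [h0, Finset.mul_sum]
  refine (Finset.abs_sum_le_sum_abs _ _).trans (Finset.sum_le_sum fun j _ => ?_)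
  rw [abs_mul]
  exact mul_le_mul_of_nonneg_right (hA i j) (abs_nonneg _)

lemma sum_abs_mulVec_sub_le {m k : ℕ} (A : Matrix (Fin m) (Fin k) ℝ) (c M : ℝ)
    (hA : ∀ i j, |A i j| ≤ c) (hc : 0 ≤ c) (u v : Fin k → ℝ)
    (hM' : ∀ j, |u j - v j| ≤ M) :
    ∑ i, |A.mulVec u i - A.mulVec v i| ≤
      c * ((Finset.univ.filter fun ij : Fin m × Fin k => A ij.1 ij.2 ≠ 0).card : ℝ) * M := by
  have h1 : ∀ i, |A.mulVec u i - A.mulVec v i| ≤ ∑ j, |A i j| * |u j - v j| := by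
    intro i
    have h0 : A.mulVec u i - A.mulVec v i = ∑ j, A i j * (u j - v j) := by
      simp [Matrix.mulVec, dotProduct, ← Finset.sum_sub_distrib, mul_sub]
    rw [h0]
    exact (Finset.abs_sum_le_sum_abs _ _).trans (le_of_eq (by simp [abs_mul]))
  calc ∑ i, |A.mulVec u i - A.mulVec v i| ≤ ∑ i, ∑ j, |A i j| * |u j - v j| :=
        Finset.sum_le_sum fun i _ => h1 i
    _ = ∑ ij ∈ (Finset.univ : Finset (Fin m × Fin k)), |A ij.1 ij.2| * |u ij.2 - v ij.2| := by
        rw [← Finset.sum_product']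
        rfl
    _ = ∑ ij ∈ (Finset.univ.filter fun ij : Fin m × Fin k => A ij.1 ij.2 ≠ 0),
          |A ij.1 ij.2| * |u ij.2 - v ij.2| := by
        refine (Finset.sum_filter_of_ne fun ij _ h => ?_).symm
        exact fun h0 => h (by simp [h0])
    _ ≤ ∑ ij ∈ (Finset.univ.filter fun ij : Fin m × Fin k => A ij.1 ij.2 ≠ 0), c * M := by
        refine Finset.sum_le_sum fun ij hij => ?_
        have hM0 : 0 ≤ M := le_trans (abs_nonneg _) (hM' ij.2)
        exact mul_le_mul (hA _ _) (hM' _) (abs_nonneg _) hc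
    _ = c * ((Finset.univ.filter fun ij : Fin m × Fin k => A ij.1 ij.2 ≠ 0).card : ℝ) * M := by
        rw [Finset.sum_const, nsmul_eq_mul]; ring

lemma NeuralNet.hidden_lip {d : ℕ} (Φ : NeuralNet d) (hd : 1 ≤ d) (c : ℝ) (hc : 1 ≤ c)
    (n : ℕ) (hn : 1 ≤ n)
    (hW : ∀ ℓ < Φ.L, ((Finset.univ.filter
      fun ij : Fin (Φ.N (ℓ+1)) × Fin (Φ.N ℓ) => Φ.A ℓ ij.1 ij.2 ≠ 0).card ≤ n))
    (hA : ∀ ℓ < Φ.L, ∀ i j, |Φ.A ℓ i j| ≤ c)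
    (x y : Fin d → ℝ) :
    ∀ k, k < Φ.L →
      (∀ i, |Φ.hidden k x i - Φ.hidden k y i| ≤ d * c^k * n^(k/2) * dist x y) ∧
      (∑ i, |Φ.hidden k x i - Φ.hidden k y i| ≤ d * c^k * n^((k+1)/2) * dist x y) := by
  have hdist : (0:ℝ) ≤ dist x y := dist_nonneg
  have hc0 : (0:ℝ) ≤ c := le_trans zero_le_one hc
  intro k
  induction k with
  | zero =>
    intro _
    constructor
    · intro i
      simp only [NeuralNet.hidden, pow_zero, Nat.zero_div, pow_zero, mul_one, one_mul]
      have h1 : |x (Fin.cast Φ.hN0 i) - y (Fin.cast Φ.hN0 i)| ≤ dist x y := by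
        rw [← Real.dist_eq]
        exact dist_le_pi_dist x y _
      calc |(x ∘ Fin.cast Φ.hN0) i - (y ∘ Fin.cast Φ.hN0) i| ≤ dist x y := h1
        _ ≤ (d:ℝ) * dist x y := by
            nlinarith [(Nat.one_le_cast (α := ℝ)).mpr hd]
    · simp only [NeuralNet.hidden, pow_zero, mul_one, one_mul]
      have : ∀ i : Fin (Φ.N 0), |(x ∘ Fin.cast Φ.hN0) i - (y ∘ Fin.cast Φ.hN0) i| ≤ dist x y := by
        intro i
        rw [Function.comp_apply, Function.comp_apply, ← Real.dist_eq]
        exact dist_le_pi_dist x y _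
      calc ∑ i, |(x ∘ Fin.cast Φ.hN0) i - (y ∘ Fin.cast Φ.hN0) i|
          ≤ ∑ _i : Fin (Φ.N 0), dist x y := Finset.sum_le_sum fun i _ => this i
        _ = (Φ.N 0 : ℝ) * dist x y := by simp [Finset.sum_const, nsmul_eq_mul]
        _ = (d:ℝ) * dist x y := by rw [Φ.hN0]
        _ = (d:ℝ) * (n:ℝ)^((0+1)/2 : ℕ) * dist x y := by norm_num
  | succ k ih =>
    intro hkL
    have hk : k < Φ.L := Nat.lt_of_succ_lt hkL
    obtain ⟨ihsup, ihsum⟩ := ih hk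
    have habs : ∀ i, |Φ.hidden (k+1) x i - Φ.hidden (k+1) y i| ≤
        |(Φ.A k).mulVec (Φ.hidden k x) i - (Φ.A k).mulVec (Φ.hidden k y) i| := by
      intro i
      show |relu _ - relu _| ≤ _
      refine (abs_relu_sub _ _).trans (le_of_eq ?_)
      ring_nf
    have hAk := hA k hk
    have hqk := hW k hk
    constructor
    · intro i
      refine (habs i).trans ?_
      refine (abs_mulVec_sub_le _ c hAk _ _ i).trans ?_
      calc c * ∑ j, |Φ.hidden k x j - Φ.hidden k y j|
          ≤ c * ((d:ℝ) * c^k * (n:ℝ)^((k+1)/2 : ℕ) * dist x y) :=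
            mul_le_mul_of_nonneg_left ihsum hc0
        _ = (d:ℝ) * c^(k+1) * (n:ℝ)^((k+1)/2 : ℕ) * dist x y := by ring
    · have hstep := sum_abs_mulVec_sub_le (Φ.A k) c ((d:ℝ) * c^k * (n:ℝ)^(k/2 : ℕ) * dist x y)
        hAk hc0 (Φ.hidden k x) (Φ.hidden k y) ihsup
      have h2 : ∑ i, |Φ.hidden (k+1) x i - Φ.hidden (k+1) y i| ≤
          ∑ i, |(Φ.A k).mulVec (Φ.hidden k x) i - (Φ.A k).mulVec (Φ.hidden k y) i| :=
        Finset.sum_le_sum fun i _ => habs i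
      refine h2.trans (hstep.trans ?_)
      have hcard : (((Finset.univ.filter
          fun ij : Fin (Φ.N (k+1)) × Fin (Φ.N k) => Φ.A k ij.1 ij.2 ≠ 0).card : ℝ)) ≤ (n:ℝ) :=
        Nat.cast_le.mpr hqk
      have hexp : (k+1+1)/2 = k/2 + 1 := by omega
      rw [hexp]
      have hpos : (0:ℝ) ≤ (d:ℝ) * c^k * (n:ℝ)^(k/2 : ℕ) * dist x y := by positivity
      calc c * ((Finset.univ.filter
            fun ij : Fin (Φ.N (k+1)) × Fin (Φ.N k) => Φ.A k ij.1 ij.2 ≠ 0).card : ℝ) *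
            ((d:ℝ) * c^k * (n:ℝ)^(k/2 : ℕ) * dist x y)
          ≤ c * (n:ℝ) * ((d:ℝ) * c^k * (n:ℝ)^(k/2 : ℕ) * dist x y) := by
            refine mul_le_mul_of_nonneg_right ?_ hpos
            exact mul_le_mul_of_nonneg_left hcard hc0
        _ = (d:ℝ) * c^(k+1) * (n:ℝ)^(k/2 + 1 : ℕ) * dist x y := by ring

lemma NeuralNet.realization_lip {d : ℕ} (Φ : NeuralNet d) (hd : 1 ≤ d) (c : ℝ) (hc : 1 ≤ c)
    (n : ℕ) (hn : 1 ≤ n) (hWn : Φ.weightCount ≤ n)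
    (hA : ∀ ℓ < Φ.L, ∀ i j, |Φ.A ℓ i j| ≤ c)
    (x y : Fin d → ℝ) :
    |Φ.realization x - Φ.realization y| ≤ (d:ℝ) * c^Φ.L * (n:ℝ)^(Φ.L/2 : ℕ) * dist x y := by
  have hc0 : (0:ℝ) ≤ c := le_trans zero_le_one hc
  have hW : ∀ ℓ < Φ.L, ((Finset.univ.filter
      fun ij : Fin (Φ.N (ℓ+1)) × Fin (Φ.N ℓ) => Φ.A ℓ ij.1 ij.2 ≠ 0).card ≤ n) := by
    intro ℓ hℓ
    refine le_trans ?_ hWn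
    unfold NeuralNet.weightCount
    calc (Finset.univ.filter
        fun ij : Fin (Φ.N (ℓ+1)) × Fin (Φ.N ℓ) => Φ.A ℓ ij.1 ij.2 ≠ 0).card
        ≤ (Finset.univ.filter
          fun ij : Fin (Φ.N (ℓ+1)) × Fin (Φ.N ℓ) => Φ.A ℓ ij.1 ij.2 ≠ 0).card
          + (Finset.univ.filter fun i : Fin (Φ.N (ℓ + 1)) => Φ.b ℓ i ≠ 0).card :=
          Nat.le_add_right _ _
      _ ≤ ∑ ℓ ∈ Finset.range Φ.L, ((Finset.univ.filter
            fun ij : Fin (Φ.N (ℓ + 1)) × Fin (Φ.N ℓ) => Φ.A ℓ ij.1 ij.2 ≠ 0).card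
            + (Finset.univ.filter fun i : Fin (Φ.N (ℓ + 1)) => Φ.b ℓ i ≠ 0).card) :=
          Finset.single_le_sum (f := fun ℓ => (Finset.univ.filter
            (fun ij : Fin (Φ.N (ℓ + 1)) × Fin (Φ.N ℓ) => Φ.A ℓ ij.1 ij.2 ≠ 0)).card
            + (Finset.univ.filter fun i : Fin (Φ.N (ℓ + 1)) => Φ.b ℓ i ≠ 0).card)
            (fun _ _ => Nat.zero_le _) (Finset.mem_range.mpr hℓ)
  have hL1 : Φ.L - 1 < Φ.L := Nat.sub_lt Φ.hL Nat.one_pos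
  obtain ⟨_, hsum⟩ := Φ.hidden_lip hd c hc n hn hW hA x y (Φ.L - 1) hL1
  have hreal : Φ.realization x - Φ.realization y =
      (Φ.A (Φ.L - 1)).mulVec (Φ.hidden (Φ.L - 1) x) (Fin.cast (show (1 : ℕ) = Φ.N (Φ.L - 1 + 1) by
        rw [Nat.sub_add_cancel Φ.hL, Φ.hNL]) 0)
      - (Φ.A (Φ.L - 1)).mulVec (Φ.hidden (Φ.L - 1) y) (Fin.cast (show (1 : ℕ) = Φ.N (Φ.L - 1 + 1) by
        rw [Nat.sub_add_cancel Φ.hL, Φ.hNL]) 0) := by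
    unfold NeuralNet.realization
    simp only [Pi.add_apply]
    ring
  rw [hreal]
  refine (abs_mulVec_sub_le _ c (hA _ hL1) _ _ _).trans ?_
  calc c * ∑ j, |Φ.hidden (Φ.L-1) x j - Φ.hidden (Φ.L-1) y j|
      ≤ c * ((d:ℝ) * c^(Φ.L-1) * (n:ℝ)^((Φ.L-1+1)/2 : ℕ) * dist x y) :=
        mul_le_mul_of_nonneg_left hsum hc0
    _ = (d:ℝ) * (c * c^(Φ.L-1)) * (n:ℝ)^((Φ.L-1+1)/2 : ℕ) * dist x y := by ring
    _ = (d:ℝ) * c^Φ.L * (n:ℝ)^(Φ.L/2 : ℕ) * dist x y := by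
        rw [← pow_succ']
        rw [Nat.sub_add_cancel Φ.hL]

lemma NeuralNet.realization_lipschitzWith {d : ℕ} (Φ : NeuralNet d) (hd : 1 ≤ d) (c : ℝ)
    (hc : 1 ≤ c) (n : ℕ) (hn : 1 ≤ n) (hWn : Φ.weightCount ≤ n)
    (hA : ∀ ℓ < Φ.L, ∀ i j, |Φ.A ℓ i j| ≤ c) :
    LipschitzWith (Real.toNNReal ((d:ℝ) * c^Φ.L * (n:ℝ)^(Φ.L/2 : ℕ))) Φ.realization := by
  refine LipschitzWith.of_dist_le_mul fun x y => ?_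
  rw [Real.dist_eq, Real.coe_toNNReal _ (by positivity)]
  exact Φ.realization_lip hd c hc n hn hWn hA x y

lemma NeuralNet.realization_continuous {d : ℕ} (Φ : NeuralNet d) (hd : 1 ≤ d) (c : ℝ)
    (hc : 1 ≤ c) (hA : ∀ ℓ < Φ.L, ∀ i j, |Φ.A ℓ i j| ≤ c) :
    Continuous Φ.realization :=
  (Φ.realization_lipschitzWith hd c hc (max Φ.weightCount 1) (le_max_right _ _)
    (le_max_left _ _) hA).continuous


/-- The zero network. -/
def zeroNet (d : ℕ) : NeuralNet d where
  L := 1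
  hL := Nat.one_pos
  N := fun k => if k = 0 then d else 1
  hN0 := by simp
  hNL := by simp
  A := fun _ => 0
  b := fun _ => 0

lemma zeroNet_realization (d : ℕ) : (zeroNet d).realization = fun _ => (0:ℝ) := by
  funext x
  unfold NeuralNet.realization
  show (Matrix.mulVec (0 : Matrix (Fin 1) (Fin d) ℝ) _ + 0) _ = 0
  simp [Matrix.mulVec, dotProduct]
  exact Finset.sum_eq_zero fun _ _ => zero_mul _

lemma zeroNet_weightCount (d : ℕ) : (zeroNet d).weightCount = 0 := by
  unfold NeuralNet.weightCount
  simp [zeroNet]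

lemma zero_mem_NNSet (d : ℕ) (ℓf : ℕ → ℕ∞) (cf : ℕ → ℝ≥0∞) (n : ℕ)
    (hℓ : 1 ≤ ℓf n) : (fun _ => (0:ℝ)) ∈ NNSet d ℓf cf n := by
  refine ⟨zeroNet d, (zeroNet_realization d).symm, ?_, ?_, ?_⟩
  · rw [zeroNet_weightCount]; exact Nat.zero_le _
  · simpa [zeroNet] using hℓ
  · intro ℓ _
    constructor
    · intro i j; show ENNReal.ofReal |(0:ℝ)| ≤ cf n; simp
    · intro i; show ENNReal.ofReal |(0:ℝ)| ≤ cf n; simp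

end Aux

end

section More
section GC
variable (ℓf : ℕ → ℕ∞) (cf : ℕ → ℝ≥0∞)

lemma gammaStar_top_of_mem_all (h : ∀ γ : ℝ, 0 ≤ γ →
    ∃ L : ℕ, 1 ≤ L ∧ (L : ℕ∞) ≤ lstar ℓf ∧
      0 < Filter.limsup
        (fun n : ℕ => cf n ^ L * (n : ℝ≥0∞) ^ (L / 2) / (n : ℝ≥0∞) ^ (γ : ℝ))
        Filter.atTop) : gammaStar ℓf cf = ⊤ := by
  by_contra hne
  have hlt : gammaStar ℓf cf < ⊤ := lt_top_iff_ne_top.mpr hne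
  set γ := (gammaStar ℓf cf).toReal + 1 with hγdef
  have hγ0 : 0 ≤ γ := by positivity
  have hmem : ENNReal.ofReal γ ≤ gammaStar ℓf cf := le_sSup ⟨γ, hγ0, rfl, h γ hγ0⟩
  have : gammaStar ℓf cf < ENNReal.ofReal γ := by
    rw [hγdef]
    calc gammaStar ℓf cf = ENNReal.ofReal (gammaStar ℓf cf).toReal :=
          (ENNReal.ofReal_toReal hne).symm
      _ < ENNReal.ofReal ((gammaStar ℓf cf).toReal + 1) := by
          rw [ENNReal.ofReal_lt_ofReal_iff (by positivity)]; linarith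
  exact absurd hmem this.not_ge

lemma cf_ne_top (hcmono : Monotone cf) (hℓ2 : ∀ n, 2 ≤ ℓf n)
    (hγfin : gammaStar ℓf cf < ⊤) : ∀ n, cf n ≠ ⊤ := by
  by_contra hc
  push_neg at hc
  obtain ⟨n0, hn0⟩ := hc
  refine absurd (gammaStar_top_of_mem_all ℓf cf ?_) hγfin.ne
  intro γ hγ0
  refine ⟨1, le_refl _, ?_, ?_⟩
  · exact le_trans (by norm_num) ((hℓ2 0).trans (le_iSup (fun n => ℓf n) 0))
  · have hev : ∀ᶠ n in (atTop : Filter ℕ), (fun n : ℕ =>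
        cf n ^ 1 * (n : ℝ≥0∞) ^ (1 / 2) / (n : ℝ≥0∞) ^ (γ : ℝ)) n = ⊤ := by
      filter_upwards [eventually_ge_atTop n0, eventually_ge_atTop 1] with n hn hn1
      have h1 : cf n = ⊤ := top_le_iff.mp (hn0 ▸ hcmono hn)
      have h2 : (n : ℝ≥0∞) ^ (γ : ℝ) ≠ ⊤ :=
        ENNReal.rpow_ne_top_of_nonneg hγ0 (by simp)
      have h3 : (n : ℝ≥0∞) ^ (γ : ℝ) ≠ 0 := by
        apply ne_of_gt
        apply ENNReal.rpow_pos
        · exact_mod_cast Nat.pos_of_ne_zero (by omega)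
        · simp
      simp only [h1, pow_one]
      rw [ENNReal.top_mul (by simp), ENNReal.top_div]
      simp [h2]
    have : Filter.limsup (fun n : ℕ =>
        cf n ^ 1 * (n : ℝ≥0∞) ^ (1 / 2) / (n : ℝ≥0∞) ^ (γ : ℝ)) atTop = ⊤ := by
      apply top_le_iff.mp
      exact le_limsup_of_frequently_le ((hev.mono fun n h => le_of_eq h.symm).frequently)
        ⟨⊤, Filter.eventually_map.mpr (Filter.Eventually.of_forall fun _ => le_top)⟩
    rw [this]; exact ENNReal.zero_lt_top

lemma lstar_ne_top (hc1 : ∀ n, 1 ≤ cf n) (hγfin : gammaStar ℓf cf < ⊤) :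
    lstar ℓf ≠ ⊤ := by
  intro htop
  refine absurd (gammaStar_top_of_mem_all ℓf cf ?_) hγfin.ne
  intro γ hγ0
  obtain ⟨L2, hL2⟩ := exists_nat_ge γ
  refine ⟨2 * L2 + 1, by omega, by rw [htop]; exact le_top, ?_⟩
  have hev : ∀ᶠ n in (atTop : Filter ℕ), (1:ℝ≥0∞) ≤
      cf n ^ (2 * L2 + 1) * (n : ℝ≥0∞) ^ ((2 * L2 + 1) / 2) / (n : ℝ≥0∞) ^ (γ : ℝ) := by
    filter_upwards [eventually_ge_atTop 1] with n hn
    have hn1 : (1:ℝ≥0∞) ≤ (n:ℝ≥0∞) := by exact_mod_cast hn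
    have hne : (n : ℝ≥0∞) ^ (γ : ℝ) ≠ ⊤ := ENNReal.rpow_ne_top_of_nonneg hγ0 (by simp)
    rw [ENNReal.le_div_iff_mul_le (Or.inl (ne_of_gt (ENNReal.rpow_pos
      (by exact_mod_cast Nat.pos_of_ne_zero (by omega)) (by simp)))) (Or.inl hne), one_mul]
    have h1 : (n : ℝ≥0∞) ^ (γ : ℝ) ≤ (n : ℝ≥0∞) ^ (((2 * L2 + 1) / 2 : ℕ) : ℝ) := by
      apply ENNReal.rpow_le_rpow_of_exponent_le hn1
      have : ((2 * L2 + 1) / 2 : ℕ) = L2 := by omega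
      rw [this]
      exact_mod_cast hL2
    rw [ENNReal.rpow_natCast] at h1
    calc (n : ℝ≥0∞) ^ (γ : ℝ) ≤ (n : ℝ≥0∞) ^ ((2 * L2 + 1) / 2) := h1
      _ = 1 * (n : ℝ≥0∞) ^ ((2 * L2 + 1) / 2) := (one_mul _).symm
      _ ≤ cf n ^ (2 * L2 + 1) * (n : ℝ≥0∞) ^ ((2 * L2 + 1) / 2) := by
          apply mul_le_mul_left
          exact one_le_pow_of_one_le' (hc1 n) _
  have h2 : (1:ℝ≥0∞) ≤ Filter.limsup (fun n : ℕ =>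
      cf n ^ (2 * L2 + 1) * (n : ℝ≥0∞) ^ ((2 * L2 + 1) / 2) / (n : ℝ≥0∞) ^ (γ : ℝ)) atTop :=
    le_limsup_of_frequently_le hev.frequently
      ⟨⊤, Filter.eventually_map.mpr (Filter.Eventually.of_forall fun _ => le_top)⟩
  exact lt_of_lt_of_le zero_lt_one h2

lemma eventual_bound (γ : ℝ) (hγ0 : 0 ≤ γ) (hγ : gammaStar ℓf cf < ENNReal.ofReal γ)
    (L : ℕ) (hL1 : 1 ≤ L) (hLs : (L : ℕ∞) ≤ lstar ℓf) :
    ∀ᶠ n in (atTop : Filter ℕ), cf n ^ L * (n : ℝ≥0∞) ^ (L / 2) ≤ (n : ℝ≥0∞) ^ (γ : ℝ) := by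
  have hnotmem : ¬ (0 < Filter.limsup
      (fun n : ℕ => cf n ^ L * (n : ℝ≥0∞) ^ (L / 2) / (n : ℝ≥0∞) ^ (γ : ℝ)) atTop) := by
    intro hpos
    have : ENNReal.ofReal γ ≤ gammaStar ℓf cf := le_sSup ⟨γ, hγ0, rfl, L, hL1, hLs, hpos⟩
    exact absurd this hγ.not_ge
  have hzero : Filter.limsup
      (fun n : ℕ => cf n ^ L * (n : ℝ≥0∞) ^ (L / 2) / (n : ℝ≥0∞) ^ (γ : ℝ)) atTop = 0 :=
    le_antisymm (not_lt.mp hnotmem) zero_le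
  have hev : ∀ᶠ n in (atTop : Filter ℕ),
      cf n ^ L * (n : ℝ≥0∞) ^ (L / 2) / (n : ℝ≥0∞) ^ (γ : ℝ) < 1 :=
    Filter.eventually_lt_of_limsup_lt (by rw [hzero]; exact zero_lt_one)
  filter_upwards [hev, eventually_ge_atTop 1] with n hn hn1
  have hne : (n : ℝ≥0∞) ^ (γ : ℝ) ≠ ⊤ := ENNReal.rpow_ne_top_of_nonneg hγ0 (by simp)
  have hne0 : (n : ℝ≥0∞) ^ (γ : ℝ) ≠ 0 := ne_of_gt (ENNReal.rpow_pos
    (by exact_mod_cast Nat.pos_of_ne_zero (by omega)) (by simp))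
  rw [ENNReal.div_lt_iff (Or.inl hne0) (Or.inl hne), one_mul] at hn
  exact hn.le

end GC

lemma uniform_real_bound (ℓf : ℕ → ℕ∞) (cf : ℕ → ℝ≥0∞)
    (hcmono : Monotone cf) (hc1 : ∀ n, 1 ≤ cf n) (hcfin : ∀ n, cf n ≠ ⊤)
    (ℓs : ℕ) (hℓs : lstar ℓf = (ℓs : ℕ∞))
    (γ : ℝ) (hγ0 : 0 ≤ γ) (hγ : gammaStar ℓf cf < ENNReal.ofReal γ) :
    ∃ Creal : ℝ, 1 ≤ Creal ∧ ∀ n : ℕ, 1 ≤ n → ∀ L : ℕ, 1 ≤ L → (L : ℕ∞) ≤ lstar ℓf →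
      (cf n).toReal ^ L * (n : ℝ) ^ (L / 2 : ℕ) ≤ Creal * (n : ℝ) ^ γ := by
  have hLle : ∀ L : ℕ, (L : ℕ∞) ≤ lstar ℓf → L ≤ ℓs := by
    intro L hL
    rw [hℓs] at hL
    exact_mod_cast hL
  -- eventual bound for all L in Icc 1 ℓs
  have hev : ∀ᶠ n in (atTop : Filter ℕ), ∀ L ∈ Finset.Icc 1 ℓs,
      cf n ^ L * (n : ℝ≥0∞) ^ (L / 2) ≤ (n : ℝ≥0∞) ^ (γ : ℝ) := by
    rw [Filter.eventually_all_finset]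
    intro L hL
    rw [Finset.mem_Icc] at hL
    exact eventual_bound ℓf cf γ hγ0 hγ L hL.1 (by rw [hℓs]; exact_mod_cast hL.2)
  obtain ⟨N, hN⟩ := Filter.eventually_atTop.mp hev
  set N' := max N 1 with hN'def
  have hcr1 : ∀ m, (1:ℝ) ≤ (cf m).toReal := by
    intro m
    have := ENNReal.toReal_mono (hcfin m) (hc1 m)
    simpa using this
  have hcrmono : ∀ m m', m ≤ m' → (cf m).toReal ≤ (cf m').toReal := fun m m' h =>
    ENNReal.toReal_mono (hcfin m') (hcmono h)
  refine ⟨max 1 ((cf N').toReal ^ ℓs * (N' : ℝ) ^ ℓs), le_max_left _ _, ?_⟩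
  intro n hn L hL1 hLs
  have hLℓs : L ≤ ℓs := hLle L hLs
  have hnγ1 : (1:ℝ) ≤ (n : ℝ) ^ γ := by
    have h1 : ((n:ℝ)) ^ (0:ℝ) ≤ (n:ℝ) ^ γ :=
      Real.rpow_le_rpow_of_exponent_le (by exact_mod_cast hn) hγ0
    rwa [Real.rpow_zero] at h1
  have hnγ0 : (0:ℝ) ≤ (n : ℝ) ^ γ := by positivity
  by_cases hcase : N ≤ n
  · -- use the eventual bound
    have hb := hN n hcase L (Finset.mem_Icc.mpr ⟨hL1, hLℓs⟩)
    have hfin : cf n ^ L * (n : ℝ≥0∞) ^ (L / 2) ≠ ⊤ :=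
      ENNReal.mul_ne_top (ENNReal.pow_ne_top (hcfin n)) (ENNReal.pow_ne_top (by simp))
    have h2 := ENNReal.toReal_mono (ENNReal.rpow_ne_top_of_nonneg hγ0 (by simp)) hb
    rw [ENNReal.toReal_mul, ENNReal.toReal_pow, ENNReal.toReal_pow] at h2
    rw [← ENNReal.toReal_rpow] at h2
    simp only [ENNReal.toReal_natCast] at h2
    calc (cf n).toReal ^ L * (n : ℝ) ^ (L / 2 : ℕ) ≤ (n:ℝ) ^ γ := h2
      _ ≤ max 1 ((cf N').toReal ^ ℓs * (N' : ℝ) ^ ℓs) * (n : ℝ) ^ γ := by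
          nlinarith [le_max_left (1:ℝ) ((cf N').toReal ^ ℓs * (N' : ℝ) ^ ℓs)]
  · -- n < N : bound by the constant
    push_neg at hcase
    have hnN' : n ≤ N' := le_trans hcase.le (le_max_left _ _)
    have h1 : (cf n).toReal ^ L ≤ (cf N').toReal ^ ℓs := by
      calc (cf n).toReal ^ L ≤ (cf N').toReal ^ L :=
            pow_le_pow_left₀ (le_trans zero_le_one (hcr1 n)) (hcrmono n N' hnN') L
        _ ≤ (cf N').toReal ^ ℓs := pow_le_pow_right₀ (hcr1 N') hLℓs
    have h2 : (n : ℝ) ^ (L / 2 : ℕ) ≤ (N' : ℝ) ^ ℓs := by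
      calc (n : ℝ) ^ (L / 2 : ℕ) ≤ (N' : ℝ) ^ (L / 2 : ℕ) :=
            pow_le_pow_left₀ (by positivity) (by exact_mod_cast hnN') _
        _ ≤ (N' : ℝ) ^ ℓs := by
            apply pow_le_pow_right₀
            · have : (1:ℕ) ≤ N' := le_max_right _ _
              exact_mod_cast this
            · omega
    calc (cf n).toReal ^ L * (n : ℝ) ^ (L / 2 : ℕ)
        ≤ (cf N').toReal ^ ℓs * (N' : ℝ) ^ ℓs := by
          apply mul_le_mul h1 h2 (by positivity)
          positivity
      _ ≤ max 1 ((cf N').toReal ^ ℓs * (N' : ℝ) ^ ℓs) * 1 := by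
          rw [mul_one]; exact le_max_right _ _
      _ ≤ max 1 ((cf N').toReal ^ ℓs * (N' : ℝ) ^ ℓs) * (n : ℝ) ^ γ := by
          apply mul_le_mul_of_nonneg_left hnγ1
          exact le_trans zero_le_one (le_max_left _ _)

lemma inv_estimate (d : ℕ) (hd : 0 < d) (p : ℝ) (hp : 0 < p)
    (h : (Fin d → ℝ) → ℝ) (Λ : ℝ) (hΛ : 0 < Λ)
    (hlip : ∀ x y, |h x - h y| ≤ Λ * dist x y)
    (x0 : Fin d → ℝ) (hx0 : x0 ∈ unitCube d) :
    ENNReal.ofReal (|h x0| / 2) *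
      ENNReal.ofReal (min 1 (|h x0| / (2 * Λ))) ^ ((d : ℝ) / p) ≤
      eLpNorm h (ENNReal.ofReal p) (volume.restrict (unitCube d)) := by
  set M := |h x0| with hM
  set r := min 1 (M / (2 * Λ)) with hrdef
  have hM0 : 0 ≤ M := abs_nonneg _
  have hr0 : 0 ≤ r := le_min zero_le_one (by positivity)
  have hr1 : r ≤ 1 := min_le_left _ _
  set a : Fin d → ℝ := fun j => max 0 (x0 j - r) with hadef
  set b : Fin d → ℝ := fun j => a j + r with hbdef
  have hx0c : ∀ j, 0 ≤ x0 j ∧ x0 j ≤ 1 := by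
    intro j
    obtain ⟨h1, h2⟩ := hx0
    exact ⟨h1 j, h2 j⟩
  have hQsub : Set.Icc a b ⊆ unitCube d := by
    intro y hy
    obtain ⟨hy1, hy2⟩ := hy
    constructor
    · intro j
      exact le_trans (le_max_left _ _) (hy1 j)
    · intro j
      refine le_trans (hy2 j) ?_
      show a j + r ≤ 1
      rcases le_or_gt r (x0 j) with hc | hc
      · have : a j = x0 j - r := max_eq_right (by linarith)
        rw [this]
        linarith [(hx0c j).2]
      · have : a j = 0 := max_eq_left (by linarith)
        rw [this]
        linarith
  have hdist : ∀ y ∈ Set.Icc a b, dist y x0 ≤ r := by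
    intro y hy
    rw [dist_pi_le_iff hr0]
    intro j
    rw [Real.dist_eq, abs_le]
    have h1 := hy.1 j
    have h2 := hy.2 j
    have h3 : a j ≤ x0 j := by
      rcases le_or_gt r (x0 j) with hc | hc
      · have : a j = x0 j - r := max_eq_right (by linarith)
        rw [this]; linarith
      · have : a j = 0 := max_eq_left (by linarith)
        rw [this]; exact (hx0c j).1
    have h4 : x0 j ≤ a j + r := by
      have : x0 j - r ≤ a j := le_max_right _ _
      linarith
    show -r ≤ y j - x0 j ∧ y j - x0 j ≤ r
    constructor
    · have : y j ≥ a j := h1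
      have : x0 j ≤ a j + r := h4
      linarith
    · have : y j ≤ a j + r := h2
      linarith
  have hlow : ∀ y ∈ Set.Icc a b, M / 2 ≤ |h y| := by
    intro y hy
    have h1 : |h x0 - h y| ≤ Λ * r := le_trans (hlip x0 y)
      (by
        have := hdist y hy
        rw [dist_comm] at this
        nlinarith)
    have h2 : Λ * r ≤ M / 2 := by
      have : r ≤ M / (2 * Λ) := min_le_right _ _
      calc Λ * r ≤ Λ * (M / (2 * Λ)) := by nlinarith
        _ = M / 2 := by field_simp
    have h3 : M - |h y| ≤ |h x0 - h y| := by
      have := abs_sub_abs_le_abs_sub (h x0) (h y)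
      linarith [this]
    linarith
  -- lintegral lower bound
  have hmeasQ : MeasurableSet (Set.Icc a b) := measurableSet_Icc
  have hvolQ : volume (Set.Icc a b) = ENNReal.ofReal r ^ d := by
    rw [Real.volume_Icc_pi]
    have : ∀ j : Fin d, b j - a j = r := fun j => by simp [hbdef]
    rw [Finset.prod_congr rfl fun j _ => by rw [this j]]
    simp
  have hlint : ENNReal.ofReal ((M / 2) ^ p) * ENNReal.ofReal r ^ d ≤
      ∫⁻ x, (‖h x‖₊ : ℝ≥0∞) ^ p ∂(volume.restrict (unitCube d)) := by
    have hstep1 : ∫⁻ x, (‖h x‖₊ : ℝ≥0∞) ^ p ∂(volume.restrict (Set.Icc a b)) ≤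
        ∫⁻ x, (‖h x‖₊ : ℝ≥0∞) ^ p ∂(volume.restrict (unitCube d)) :=
      lintegral_mono' (Measure.restrict_mono hQsub le_rfl) le_rfl
    refine le_trans ?_ hstep1
    have hstep2 : ∫⁻ _x, ENNReal.ofReal ((M / 2) ^ p) ∂(volume.restrict (Set.Icc a b)) ≤
        ∫⁻ x, (‖h x‖₊ : ℝ≥0∞) ^ p ∂(volume.restrict (Set.Icc a b)) := by
      refine lintegral_mono_ae ?_
      filter_upwards [ae_restrict_mem hmeasQ] with y hy
      have h1 : (M / 2) ^ p ≤ |h y| ^ p :=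
        Real.rpow_le_rpow (by positivity) (hlow y hy) hp.le
      calc ENNReal.ofReal ((M / 2) ^ p) ≤ ENNReal.ofReal (|h y| ^ p) :=
            ENNReal.ofReal_le_ofReal h1
        _ = ENNReal.ofReal |h y| ^ p :=
            (ENNReal.ofReal_rpow_of_nonneg (abs_nonneg _) hp.le).symm
        _ = (‖h y‖₊ : ℝ≥0∞) ^ p := by rw [← Real.enorm_eq_ofReal_abs, enorm_eq_nnnorm]
    refine le_trans (le_of_eq ?_) hstep2
    rw [lintegral_const, Measure.restrict_apply_univ, hvolQ]
  -- convert to eLpNorm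
  have hp' : (ENNReal.ofReal p) ≠ 0 := by
    simp [ENNReal.ofReal_eq_zero, not_le, hp]
  have hptop : (ENNReal.ofReal p) ≠ ⊤ := ENNReal.ofReal_ne_top
  rw [eLpNorm_eq_lintegral_rpow_enorm_toReal hp' hptop]
  rw [ENNReal.toReal_ofReal hp.le]
  have := ENNReal.rpow_le_rpow hlint (le_of_lt (by positivity : (0:ℝ) < 1 / p))
  refine le_trans (le_of_eq ?_) this
  rw [ENNReal.mul_rpow_of_nonneg _ _ (by positivity)]
  congr 1
  · rw [← ENNReal.ofReal_rpow_of_nonneg (by positivity) hp.le, ← ENNReal.rpow_mul]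
    rw [mul_one_div, div_self hp.ne', ENNReal.rpow_one]
  · rw [← ENNReal.rpow_natCast (ENNReal.ofReal r) d, ← ENNReal.rpow_mul]
    congr 1
    field_simp

lemma sup_bound (d : ℕ) (hd : 0 < d) (p : ℝ) (hp : 0 < p)
    (h : (Fin d → ℝ) → ℝ) (Λ : ℝ) (hΛ : 1 ≤ Λ)
    (hlip : ∀ x y, |h x - h y| ≤ Λ * dist x y) (ε : ℝ) (hε : 0 ≤ ε)
    (hq : eLpNorm h (ENNReal.ofReal p) (volume.restrict (unitCube d)) ≤ ENNReal.ofReal ε) :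
    ∀ x0 ∈ unitCube d,
      |h x0| ≤ 2 * ε + 2 * (ε * Λ ^ ((d:ℝ)/p)) ^ (p/(p + d)) := by
  intro x0 hx0
  have hΛ0 : 0 < Λ := lt_of_lt_of_le zero_lt_one hΛ
  have hrpos : (0:ℝ) ≤ (ε * Λ ^ ((d:ℝ)/p)) ^ (p/(p + d)) := by positivity
  set M := |h x0| with hMdef
  have hM0 : 0 ≤ M := abs_nonneg _
  set r := min 1 (M / (2 * Λ)) with hrdef
  have hr0 : 0 ≤ r := le_min zero_le_one (by positivity)
  have hkey := le_trans (inv_estimate d hd p hp h Λ hΛ0 hlip x0 hx0) hq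
  rw [← hMdef, ← hrdef] at hkey
  have hreal : (M / 2) * r ^ ((d:ℝ)/p) ≤ ε := by
    rw [← ENNReal.ofReal_le_ofReal_iff hε] at *
    calc ENNReal.ofReal ((M / 2) * r ^ ((d:ℝ)/p))
        = ENNReal.ofReal (M / 2) * ENNReal.ofReal (r ^ ((d:ℝ)/p)) :=
          ENNReal.ofReal_mul (by positivity)
      _ = ENNReal.ofReal (M / 2) * ENNReal.ofReal r ^ ((d:ℝ)/p) := by
          rw [ENNReal.ofReal_rpow_of_nonneg hr0 (by positivity)]
      _ ≤ ENNReal.ofReal ε := hkey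
  rcases le_total 1 (M / (2 * Λ)) with hcase | hcase
  · -- r = 1
    have hr : r = 1 := min_eq_left hcase
    rw [hr, Real.one_rpow, mul_one] at hreal
    linarith
  · -- r = M / (2Λ)
    have hr : r = M / (2 * Λ) := min_eq_right hcase
    rcases eq_or_lt_of_le hM0 with hM | hM
    · rw [← hM]; positivity
    · have ht : (0:ℝ) < M / 2 := by linarith
      have hMr : M / (2 * Λ) = (M/2) / Λ := by field_simp
      rw [hr, hMr, Real.div_rpow ht.le hΛ0.le] at hreal
      have h1 : (M/2) ^ (1 + (d:ℝ)/p) ≤ ε * Λ ^ ((d:ℝ)/p) := by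
        have h2 : (M/2) * ((M/2) ^ ((d:ℝ)/p) / Λ ^ ((d:ℝ)/p)) * Λ ^ ((d:ℝ)/p)
            ≤ ε * Λ ^ ((d:ℝ)/p) := by
          apply mul_le_mul_of_nonneg_right hreal (by positivity)
        have h3 : (M/2) * ((M/2) ^ ((d:ℝ)/p) / Λ ^ ((d:ℝ)/p)) * Λ ^ ((d:ℝ)/p)
            = (M/2) * (M/2) ^ ((d:ℝ)/p) := by
          have hne : Λ ^ ((d:ℝ)/p) ≠ 0 := by positivity
          field_simp
        rw [h3] at h2
        calc (M/2) ^ (1 + (d:ℝ)/p) = (M/2)^(1:ℝ) * (M/2) ^ ((d:ℝ)/p) :=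
              Real.rpow_add ht 1 _
          _ = (M/2) * (M/2) ^ ((d:ℝ)/p) := by rw [Real.rpow_one]
          _ ≤ ε * Λ ^ ((d:ℝ)/p) := h2
      have hexp : (0:ℝ) < 1 + (d:ℝ)/p := by positivity
      have h4 : ((M/2) ^ (1 + (d:ℝ)/p)) ^ (1 / (1 + (d:ℝ)/p))
          ≤ (ε * Λ ^ ((d:ℝ)/p)) ^ (1 / (1 + (d:ℝ)/p)) :=
        Real.rpow_le_rpow (by positivity) h1 (by positivity)
      rw [← Real.rpow_mul ht.le, mul_one_div, div_self hexp.ne', Real.rpow_one] at h4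
      have h5 : 1 / (1 + (d:ℝ)/p) = p / (p + d) := by
        rw [div_eq_div_iff (by positivity) (by positivity)]
        field_simp
      rw [h5] at h4
      linarith

lemma unitCube_measurable (d : ℕ) : MeasurableSet (unitCube d) := measurableSet_Icc

end More

section FinalAux
noncomputable section

lemma rpow_npow_comm (x : ℝ) (hx : 0 ≤ x) (c : ℝ) (k : ℕ) :
    ((x ^ k : ℝ)) ^ c = (x ^ c) ^ k := by
  rw [← Real.rpow_natCast x k, ← Real.rpow_mul hx, mul_comm, Real.rpow_mul hx,
    Real.rpow_natCast]

lemma volume_unitCube (d : ℕ) : volume (unitCube d) = 1 := by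
  rw [unitCube, Real.volume_Icc_pi]
  simp

lemma NNSet_member_lip (d : ℕ) (hd : 0 < d) (ℓf : ℕ → ℕ∞) (cf' : ℕ → ℝ≥0∞)
    (hcfin : ∀ n, cf' n ≠ ⊤) (hc1 : ∀ n, 1 ≤ cf' n)
    (Creal γ : ℝ) (hC1 : 1 ≤ Creal) (hγ0 : 0 ≤ γ)
    (hbound : ∀ n : ℕ, 1 ≤ n → ∀ L : ℕ, 1 ≤ L → (L : ℕ∞) ≤ lstar ℓf →
      (cf' n).toReal ^ L * (n : ℝ) ^ (L / 2 : ℕ) ≤ Creal * (n : ℝ) ^ γ)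
    (n : ℕ) (hn : 1 ≤ n) (G : (Fin d → ℝ) → ℝ) (hG : G ∈ NNSet d ℓf cf' n) :
    (∀ x y, |G x - G y| ≤ ((d : ℝ) * Creal * (n : ℝ) ^ γ) * dist x y) ∧ Continuous G := by
  obtain ⟨Φ, rfl, hW, hL, hbd⟩ := hG
  set c := (cf' n).toReal with hcdef
  have hc : 1 ≤ c := by
    have := ENNReal.toReal_mono (hcfin n) (hc1 n)
    simpa using this
  have hA : ∀ ℓ < Φ.L, ∀ i j, |Φ.A ℓ i j| ≤ c := by
    intro ℓ hℓ i j
    have h1 := (hbd ℓ hℓ).1 i j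
    rw [ENNReal.ofReal_le_iff_le_toReal (hcfin n)] at h1
    exact h1
  have hL1 : 1 ≤ Φ.L := Φ.hL
  have hLs : (Φ.L : ℕ∞) ≤ lstar ℓf := le_trans hL (le_iSup (fun n => ℓf n) n)
  have hkey := hbound n hn Φ.L hL1 hLs
  constructor
  · intro x y
    refine (Φ.realization_lip hd c hc n hn hW hA x y).trans ?_
    have h2 : (d:ℝ) * c ^ Φ.L * (n : ℝ) ^ (Φ.L / 2 : ℕ) ≤ (d:ℝ) * Creal * (n:ℝ) ^ γ := by
      have hd0 : (0:ℝ) ≤ (d:ℝ) := Nat.cast_nonneg d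
      calc (d:ℝ) * c ^ Φ.L * (n : ℝ) ^ (Φ.L / 2 : ℕ)
          = (d:ℝ) * (c ^ Φ.L * (n : ℝ) ^ (Φ.L / 2 : ℕ)) := by ring
        _ ≤ (d:ℝ) * (Creal * (n:ℝ) ^ γ) := mul_le_mul_of_nonneg_left hkey hd0
        _ = (d:ℝ) * Creal * (n:ℝ) ^ γ := by ring
    exact mul_le_mul_of_nonneg_right h2 dist_nonneg
  · exact Φ.realization_continuous hd c hc hA

lemma two_pow_cancel (α : ℝ) (hα : 0 < α) (k : ℕ) :
    (((2 ^ k : ℕ) : ℝ≥0∞)) ^ (α : ℝ) * ENNReal.ofReal (((2:ℝ) ^ (-α)) ^ k) = 1 := by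
  have h1 : (((2 ^ k : ℕ) : ℝ≥0∞)) = ENNReal.ofReal ((2:ℝ) ^ k) := by
    rw [ENNReal.ofReal_pow (by norm_num : (0:ℝ) ≤ 2)]
    push_cast
    norm_num
  rw [h1, ENNReal.ofReal_rpow_of_pos (by positivity), ← ENNReal.ofReal_mul (by positivity)]
  rw [rpow_npow_comm 2 (by norm_num) α k, ← mul_pow]
  rw [← Real.rpow_add two_pos]
  simp

lemma exists_approx (d : ℕ) (ℓf : ℕ → ℕ∞) (cf' : ℕ → ℝ≥0∞) (p' : ℝ≥0∞) (α : ℝ)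
    (hα : 0 < α) (F : (Fin d → ℝ) → ℝ)
    (hsup : ∀ n : ℕ, (((n + 1 : ℕ)) : ℝ≥0∞) ^ (α : ℝ) *
      dLp d (unitCube d) p' F (NNSet d ℓf cf' (n + 1)) ≤ 1) (k : ℕ) :
    ∃ G ∈ NNSet d ℓf cf' (2 ^ k),
      eLpNorm (F - G) p' (volume.restrict (unitCube d)) ≤
        ENNReal.ofReal (2 * ((2:ℝ) ^ (-α)) ^ k) := by
  have h2k : 2 ^ k - 1 + 1 = 2 ^ k := Nat.succ_pred_eq_of_pos (Nat.two_pow_pos k)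
  have hs := hsup (2 ^ k - 1)
  rw [h2k] at hs
  set X := (((2 ^ k : ℕ) : ℝ≥0∞)) ^ (α : ℝ) with hXdef
  set D := dLp d (unitCube d) p' F (NNSet d ℓf cf' (2 ^ k)) with hDdef
  have hX0 : X ≠ 0 := by
    rw [hXdef]
    apply ne_of_gt
    apply ENNReal.rpow_pos
    · exact_mod_cast Nat.two_pow_pos k
    · simp
  have hXt : X ≠ ⊤ := by
    rw [hXdef]
    exact ENNReal.rpow_ne_top_of_nonneg hα.le (by simp)
  have hcancel := two_pow_cancel α hα k
  have hinv : X⁻¹ = ENNReal.ofReal (((2:ℝ) ^ (-α)) ^ k) := by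
    calc X⁻¹ = X⁻¹ * (X * ENNReal.ofReal (((2:ℝ) ^ (-α)) ^ k)) := by rw [hcancel, mul_one]
      _ = (X⁻¹ * X) * ENNReal.ofReal (((2:ℝ) ^ (-α)) ^ k) := by ring
      _ = ENNReal.ofReal (((2:ℝ) ^ (-α)) ^ k) := by
          rw [ENNReal.inv_mul_cancel hX0 hXt, one_mul]
  have hD : D ≤ ENNReal.ofReal (((2:ℝ) ^ (-α)) ^ k) := by
    rw [← hinv, ENNReal.le_inv_iff_mul_le]
    rwa [mul_comm] at hs
  have hDlt : D < ENNReal.ofReal (2 * ((2:ℝ) ^ (-α)) ^ k) := by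
    refine lt_of_le_of_lt hD ?_
    rw [ENNReal.ofReal_lt_ofReal_iff (by positivity)]
    have : (0:ℝ) < ((2:ℝ) ^ (-α)) ^ k := by positivity
    linarith
  rw [hDdef, dLp] at hDlt
  simp only [iInf_lt_iff] at hDlt
  obtain ⟨G, hGmem, hGlt⟩ := hDlt
  exact ⟨G, hGmem, hGlt.le⟩

lemma geom_bound (dr p α γ Kr Creal : ℝ) (hdr : 1 ≤ dr) (hp : 0 < p) (hα : 0 < α)
    (hγ0 : 0 ≤ γ) (hKr : 1 ≤ Kr) (hC : 1 ≤ Creal) (hγα : dr / p * γ < α) :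
    ∃ C8 ρ : ℝ, 1 ≤ C8 ∧ 0 < ρ ∧ ρ < 1 ∧ ∀ k : ℕ,
      2 * (4 * Kr * ((2:ℝ) ^ (-α)) ^ k) +
        2 * ((4 * Kr * ((2:ℝ) ^ (-α)) ^ k) *
          (2 * dr * Creal * (2:ℝ) ^ (γ:ℝ) * ((2:ℝ) ^ (γ:ℝ)) ^ k) ^ (dr / p)) ^ (p / (p + dr))
        ≤ C8 * ρ ^ k := by
  set a := (2:ℝ) ^ (-α) with hadef
  set q := (2:ℝ) ^ (γ:ℝ) with hqdef
  have ha0 : 0 < a := Real.rpow_pos_of_pos two_pos _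
  have ha1 : a < 1 := Real.rpow_lt_one_of_one_lt_of_neg one_lt_two (by linarith)
  have hq1 : 1 ≤ q := Real.one_le_rpow (by norm_num) hγ0
  have hq0 : 0 < q := lt_of_lt_of_le zero_lt_one hq1
  set u := a * q ^ (dr/p) with hudef
  have hdr0 : 0 < dr := lt_of_lt_of_le zero_lt_one hdr
  have hu0 : 0 < u := by positivity
  have hu1 : u < 1 := by
    have h1 : q ^ (dr/p) = (2:ℝ) ^ (γ * (dr/p)) := by
      rw [hqdef, ← Real.rpow_mul (by norm_num : (0:ℝ) ≤ 2)]
    rw [hudef, hadef, h1, ← Real.rpow_add two_pos]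
    apply Real.rpow_lt_one_of_one_lt_of_neg one_lt_two
    have : γ * (dr/p) = dr/p * γ := by ring
    rw [this]
    linarith
  set ρ2 := u ^ (p/(p+dr)) with hρ2def
  have hexp0 : 0 < p/(p+dr) := by positivity
  have hρ2pos : 0 < ρ2 := Real.rpow_pos_of_pos hu0 _
  have hρ2lt1 : ρ2 < 1 := Real.rpow_lt_one hu0.le hu1 hexp0
  set Λc := 2 * dr * Creal * q with hΛcdef
  have hΛc0 : 0 < Λc := by positivity
  set c2 := (4 * Kr * Λc ^ (dr/p)) ^ (p/(p+dr)) with hc2def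
  have hc20 : 0 < c2 := by positivity
  refine ⟨8 * Kr + 2 * c2, max a ρ2, by nlinarith, lt_max_of_lt_left ha0,
    max_lt ha1 hρ2lt1, fun k => ?_⟩
  have hkey : (4 * Kr * a ^ k) * (Λc * q ^ k) ^ (dr/p) = (4 * Kr * Λc ^ (dr/p)) * u ^ k := by
    rw [Real.mul_rpow hΛc0.le (by positivity), rpow_npow_comm q hq0.le (dr/p) k,
      hudef, mul_pow]
    ring
  have hkey2 : ((4 * Kr * a ^ k) * (Λc * q ^ k) ^ (dr/p)) ^ (p/(p+dr)) = c2 * ρ2 ^ k := by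
    rw [hkey, Real.mul_rpow (by positivity) (by positivity), hc2def,
      rpow_npow_comm u hu0.le (p/(p+dr)) k]
  have hstep : 2 * (4 * Kr * a ^ k) +
      2 * ((4 * Kr * a ^ k) * (Λc * q ^ k) ^ (dr/p)) ^ (p/(p+dr))
      ≤ (8 * Kr + 2 * c2) * max a ρ2 ^ k := by
    rw [hkey2]
    have h1 : a ^ k ≤ max a ρ2 ^ k := pow_le_pow_left₀ ha0.le (le_max_left _ _) k
    have h2 : ρ2 ^ k ≤ max a ρ2 ^ k := pow_le_pow_left₀ hρ2pos.le (le_max_right _ _) k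
    have h3 : (0:ℝ) ≤ a ^ k := by positivity
    nlinarith
  calc 2 * (4 * Kr * a ^ k) +
      2 * ((4 * Kr * a ^ k) * (2 * dr * Creal * q * q ^ k) ^ (dr/p)) ^ (p/(p+dr))
      = 2 * (4 * Kr * a ^ k) +
        2 * ((4 * Kr * a ^ k) * (Λc * q ^ k) ^ (dr/p)) ^ (p/(p+dr)) := by rw [hΛcdef]
    _ ≤ (8 * Kr + 2 * c2) * max a ρ2 ^ k := hstep

end

end FinalAux

lemma one_le_mul' {a b : ℝ} (ha : 1 ≤ a) (hb : 1 ≤ b) : 1 ≤ a * b := by nlinarith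

lemma one_le_pow' {a : ℝ} (ha : 1 ≤ a) (k : ℕ) : 1 ≤ a ^ k := by
  calc (1:ℝ) = 1 ^ k := (one_pow k).symm
    _ ≤ a ^ k := pow_le_pow_left₀ zero_le_one ha k

set_option maxHeartbeats 1000000 in
/-- Theorem 3.1 / `thm:SobolevTypeEmbeddingSufficient`, first part:
if `γ*(ℓ,c) < ∞` and `α > (d/p)·γ*(ℓ,c)` with `p ∈ (0,∞)`, then
`A^α_{ℓ,c,p}([0,1]^d) ↪ C([0,1]^d)`: every `f` in the space has a continuous representative,
and `‖f‖_{L^∞} ≤ C·‖f‖_{A^α_{ℓ,c,p}}` for a constant `C = C(d,p,α,ℓ,c) > 0`. -/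
theorem embedding_into_continuous
    (d : ℕ) (hd : 0 < d) (ℓf cf : ℕ → ℕ∞)
    (hℓmono : Monotone ℓf) (hcmono : Monotone cf)
    (hℓ2 : ∀ n, 2 ≤ ℓf n) (hc1 : ∀ n, 1 ≤ cf n)
    (p : ℝ) (hp : 0 < p) (α : ℝ) (hα : 0 < α)
    (hγfin : gammaStar ℓf (fun n => (cf n : ℝ≥0∞)) < ⊤)
    (hcond : ENNReal.ofReal ((d : ℝ) / p) * gammaStar ℓf (fun n => (cf n : ℝ≥0∞))
      < ENNReal.ofReal α) :
    ∃ C : ℝ≥0∞, 0 < C ∧ C < ⊤ ∧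
      ∀ f : (Fin d → ℝ) → ℝ,
        MemA d ℓf (fun n => (cf n : ℝ≥0∞)) (unitCube d) (ENNReal.ofReal p) α f →
          (∃ g : (Fin d → ℝ) → ℝ, ContinuousOn g (unitCube d) ∧
            f =ᵐ[volume.restrict (unitCube d)] g) ∧
          eLpNorm f ⊤ (volume.restrict (unitCube d)) ≤
            C * ANorm d ℓf (fun n => (cf n : ℝ≥0∞)) (unitCube d) (ENNReal.ofReal p) α f := by
  have hd1 : (1:ℝ) ≤ (d:ℝ) := by exact_mod_cast hd
  set p' := ENNReal.ofReal p with hp'def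
  have hp'0 : p' ≠ 0 := by simp [hp'def, ENNReal.ofReal_eq_zero, not_le, hp]
  have hp'top : p' ≠ ⊤ := ENNReal.ofReal_ne_top
  set μ := volume.restrict (unitCube d) with hμdef
  have hμuniv : μ Set.univ = 1 := by
    rw [hμdef, Measure.restrict_apply_univ, volume_unitCube]
  -- cf' facts
  have hcmono' : Monotone (fun n => ((cf n : ℝ≥0∞))) := fun a b h =>
    ENat.toENNReal_le.mpr (hcmono h)
  have hc1' : ∀ n, (1:ℝ≥0∞) ≤ ((cf n : ℕ∞) : ℝ≥0∞) := fun n => by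
    rw [← ENat.toENNReal_one]
    exact ENat.toENNReal_le.mpr (hc1 n)
  have hcfin : ∀ n, ((cf n : ℕ∞) : ℝ≥0∞) ≠ ⊤ :=
    cf_ne_top ℓf _ hcmono' hℓ2 hγfin
  have hlsne : lstar ℓf ≠ ⊤ := lstar_ne_top ℓf _ hc1' hγfin
  obtain ⟨ℓs, hℓs⟩ : ∃ ℓs : ℕ, lstar ℓf = (ℓs : ℕ∞) := by
    obtain ⟨a, ha⟩ := WithTop.ne_top_iff_exists.mp hlsne
    exact ⟨a, ha.symm⟩
  -- choice of γ
  have hdp : 0 < (d:ℝ)/p := by positivity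
  set g0 := (gammaStar ℓf (fun n => (cf n : ℝ≥0∞))).toReal with hg0def
  have hg00 : 0 ≤ g0 := ENNReal.toReal_nonneg
  have hcondR : (d:ℝ)/p * g0 < α := by
    have h1 : ENNReal.ofReal ((d:ℝ)/p * g0) < ENNReal.ofReal α := by
      rw [ENNReal.ofReal_mul hdp.le, hg0def, ENNReal.ofReal_toReal hγfin.ne]
      exact hcond
    have h2 := (ENNReal.ofReal_lt_ofReal_iff hα).mp h1
    calc (d:ℝ)/p * g0 ≤ max 0 ((d:ℝ)/p * g0) := le_max_right _ _
      _ < α := by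
          rcases le_or_gt ((d:ℝ)/p * g0) 0 with hc | hc
          · rw [max_eq_left hc]; exact hα
          · rw [max_eq_right hc.le]
            rcases lt_or_ge ((d:ℝ)/p * g0) α with h | h
            · exact h
            · exfalso
              rw [ENNReal.ofReal_lt_ofReal_iff hα] at h1
              linarith
  obtain ⟨γ, hγ0, hγgt, hγα⟩ : ∃ γ : ℝ, 0 ≤ γ ∧
      gammaStar ℓf (fun n => (cf n : ℝ≥0∞)) < ENNReal.ofReal γ ∧ (d:ℝ)/p * γ < α := by
    have hd0 : (0:ℝ) < (d:ℝ) := by linarith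
    have hδ0 : (0:ℝ) < α - (d:ℝ)/p * g0 := by linarith
    have hx : (0:ℝ) < (α - (d:ℝ)/p * g0) * p / (2*(d:ℝ)) := by positivity
    refine ⟨g0 + (α - (d:ℝ)/p * g0) * p / (2*(d:ℝ)), by linarith, ?_, ?_⟩
    · rw [← ENNReal.ofReal_toReal hγfin.ne, ← hg0def]
      rw [ENNReal.ofReal_lt_ofReal_iff (by linarith)]
      linarith
    · have hkey : (d:ℝ)/p * ((α - (d:ℝ)/p * g0) * p / (2*(d:ℝ))) = (α - (d:ℝ)/p * g0)/2 := by
        field_simp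
      rw [mul_add, hkey]
      linarith
  obtain ⟨Creal, hC1, hbound⟩ := uniform_real_bound ℓf (fun n => (cf n : ℝ≥0∞))
    hcmono' hc1' hcfin ℓs hℓs γ hγ0 hγgt
  -- quasi-norm constant
  set Kr := max 1 (ENNReal.LpAddConst p').toReal with hKrdef
  have hKr1 : (1:ℝ) ≤ Kr := le_max_left _ _
  have hKle : ENNReal.LpAddConst p' ≤ ENNReal.ofReal Kr := by
    rw [← ENNReal.ofReal_toReal (ENNReal.LpAddConst_lt_top p').ne]
    exact ENNReal.ofReal_le_ofReal (le_max_right _ _)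
  -- geometric constants
  obtain ⟨C8, ρ, hC81, hρ0, hρ1, hgeom⟩ := geom_bound (d:ℝ) p α γ Kr Creal hd1 hp hα hγ0
    hKr1 hC1 hγα
  have ha0 : (0:ℝ) < (2:ℝ) ^ (-α) := Real.rpow_pos_of_pos two_pos _
  have ha1 : (2:ℝ) ^ (-α) < 1 := Real.rpow_lt_one_of_one_lt_of_neg one_lt_two (by linarith)
  have hq1 : (1:ℝ) ≤ (2:ℝ) ^ (γ:ℝ) := Real.one_le_rpow (by norm_num) hγ0
  have hq0 : (0:ℝ) < (2:ℝ) ^ (γ:ℝ) := lt_of_lt_of_le zero_lt_one hq1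
  set Stot := max 1 (2*(3*Kr) +
      2*((3*Kr) * ((d:ℝ)*Creal*((2:ℝ)^(γ:ℝ))^(0:ℕ)) ^ ((d:ℝ)/p)) ^ (p/(p+(d:ℝ)))
      + C8/(1-ρ)) with hStotdef
  have hStot1 : (1:ℝ) ≤ Stot := le_max_left _ _
  -- MAIN STEP
  have main_step : ∀ f : (Fin d → ℝ) → ℝ, AEStronglyMeasurable f μ →
      ∀ θ : ℝ, 0 < θ →
      Gamma d ℓf (fun n => (cf n : ℝ≥0∞)) (unitCube d) p' α (fun x => f x / θ) ≤ 1 →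
      (∃ g : (Fin d → ℝ) → ℝ, ContinuousOn g (unitCube d) ∧ f =ᵐ[μ] g) ∧
        eLpNorm f ⊤ μ ≤ ENNReal.ofReal Stot * ENNReal.ofReal θ := by
    intro f hfm θ hθ hΓ
    set F := fun x => f x / θ with hFdef
    have hFm : AEStronglyMeasurable F μ := by
      have hF' : F = fun x => f x * θ⁻¹ := by
        funext x
        show f x / θ = f x * θ⁻¹
        rw [div_eq_mul_inv]
      rw [hF']
      exact hfm.mul_const _
    rw [Gamma, max_le_iff] at hΓ
    have hΓ1 : eLpNorm F p' μ ≤ 1 := hΓ.1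
    have hΓ2 : ∀ n : ℕ, (((n + 1 : ℕ)) : ℝ≥0∞) ^ (α:ℝ) *
        dLp d (unitCube d) p' F (NNSet d ℓf (fun n => (cf n : ℝ≥0∞)) (n + 1)) ≤ 1 := fun n =>
      le_trans (le_iSup (fun n => (((n + 1 : ℕ)) : ℝ≥0∞) ^ (α:ℝ) *
        dLp d (unitCube d) p' F (NNSet d ℓf (fun n => (cf n : ℝ≥0∞)) (n + 1))) n) hΓ.2
    choose G hGmem hGnorm using exists_approx d ℓf (fun n => (cf n : ℝ≥0∞)) p' α hα F hΓ2
    -- Lipschitz bounds for the G j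
    have hΛlip : ∀ j : ℕ, ∀ x y, |G j x - G j y| ≤
        ((d:ℝ) * Creal * ((2:ℝ)^(γ:ℝ)) ^ j) * dist x y := by
      intro j x y
      have h1 := (NNSet_member_lip d hd ℓf _ hcfin hc1' Creal γ hC1 hγ0 hbound (2^j)
        (Nat.one_le_pow j 2 (by norm_num)) (G j) (hGmem j)).1 x y
      have h2 : (((2^j : ℕ) : ℝ)) ^ (γ:ℝ) = ((2:ℝ)^(γ:ℝ)) ^ j := by
        push_cast
        rw [rpow_npow_comm 2 (by norm_num) γ j]
      rw [h2] at h1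
      exact h1
    have hGcont : ∀ j, Continuous (G j) := fun j =>
      (NNSet_member_lip d hd ℓf _ hcfin hc1' Creal γ hC1 hγ0 hbound (2^j)
        (Nat.one_le_pow j 2 (by norm_num)) (G j) (hGmem j)).2
    -- Lipschitz bound for differences
    have hdl : ∀ k : ℕ, ∀ x y, |(G (k+1) - G k) x - (G (k+1) - G k) y| ≤
        (2*(d:ℝ)*Creal*(2:ℝ)^(γ:ℝ)*((2:ℝ)^(γ:ℝ))^k) * dist x y := by
      intro k x y
      have h1 := hΛlip (k+1) x y
      have h2 := hΛlip k x y
      have hd0 : (0:ℝ) ≤ (d:ℝ)*Creal := by positivity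
      simp only [Pi.sub_apply]
      have habs : |G (k+1) x - G k x - (G (k+1) y - G k y)| ≤
          |G (k+1) x - G (k+1) y| + |G k x - G k y| := by
        have hr : G (k+1) x - G k x - (G (k+1) y - G k y) =
            (G (k+1) x - G (k+1) y) - (G k x - G k y) := by ring
        rw [hr]
        exact abs_sub _ _
      refine habs.trans ?_
      have h3 : ((2:ℝ)^(γ:ℝ))^k ≤ (2:ℝ)^(γ:ℝ) * ((2:ℝ)^(γ:ℝ))^k :=
        le_mul_of_one_le_left (by positivity) hq1
      have h4 : ((d:ℝ) * Creal * ((2:ℝ)^(γ:ℝ)) ^ k) * dist x y ≤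
          ((d:ℝ) * Creal * ((2:ℝ)^(γ:ℝ) * ((2:ℝ)^(γ:ℝ)) ^ k)) * dist x y := by
        apply mul_le_mul_of_nonneg_right _ dist_nonneg
        exact mul_le_mul_of_nonneg_left h3 hd0
      have h5 : ((d:ℝ) * Creal * ((2:ℝ)^(γ:ℝ)) ^ (k+1)) * dist x y =
          ((d:ℝ) * Creal * ((2:ℝ)^(γ:ℝ) * ((2:ℝ)^(γ:ℝ)) ^ k)) * dist x y := by ring
      rw [h5] at h1
      have hgoal : (2*(d:ℝ)*Creal*(2:ℝ)^(γ:ℝ)*((2:ℝ)^(γ:ℝ))^k) * dist x y =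
          ((d:ℝ) * Creal * ((2:ℝ)^(γ:ℝ) * ((2:ℝ)^(γ:ℝ)) ^ k)) * dist x y +
          ((d:ℝ) * Creal * ((2:ℝ)^(γ:ℝ) * ((2:ℝ)^(γ:ℝ)) ^ k)) * dist x y := by ring
      rw [hgoal]
      exact add_le_add h1 (le_trans h2 h4)
    -- eLpNorm bound for differences
    have hdnorm : ∀ k : ℕ, eLpNorm (G (k+1) - G k) p' μ ≤
        ENNReal.ofReal (4*Kr*((2:ℝ)^(-α))^k) := by
      intro k
      have hrw : G (k+1) - G k = (F - G k) - (F - G (k+1)) := by ring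
      rw [hrw]
      refine le_trans (eLpNorm_sub_le' (hFm.sub (hGcont k).aestronglyMeasurable)
        (hFm.sub (hGcont (k+1)).aestronglyMeasurable) p') ?_
      have hsum : eLpNorm (F - G k) p' μ + eLpNorm (F - G (k+1)) p' μ ≤
          ENNReal.ofReal (2*((2:ℝ)^(-α))^k) + ENNReal.ofReal (2*((2:ℝ)^(-α))^(k+1)) :=
        add_le_add (hGnorm k) (hGnorm (k+1))
      refine le_trans (mul_le_mul hKle hsum zero_le zero_le) ?_
      rw [← ENNReal.ofReal_add (by positivity) (by positivity),
        ← ENNReal.ofReal_mul (by linarith)]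
      apply ENNReal.ofReal_le_ofReal
      have hak : ((2:ℝ)^(-α))^(k+1) ≤ ((2:ℝ)^(-α))^k := by
        have hp1 : ((2:ℝ)^(-α))^(k+1) = (2:ℝ)^(-α) * ((2:ℝ)^(-α))^k := by ring
        rw [hp1]
        nlinarith [pow_nonneg ha0.le k]
      nlinarith [pow_nonneg ha0.le k, hKr1]
    -- sup bound for the differences
    have hsb : ∀ k : ℕ, ∀ x ∈ unitCube d, |G (k+1) x - G k x| ≤ C8 * ρ ^ k := by
      intro k x hx
      have hΛ1 : (1:ℝ) ≤ 2*(d:ℝ)*Creal*(2:ℝ)^(γ:ℝ)*((2:ℝ)^(γ:ℝ))^k := by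
        have hqk : (1:ℝ) ≤ ((2:ℝ)^(γ:ℝ))^k := one_le_pow' hq1 k
        have h2d : (1:ℝ) ≤ 2*(d:ℝ) := by linarith
        have hA : (1:ℝ) ≤ 2*(d:ℝ)*Creal := one_le_mul' h2d hC1
        have hB : (1:ℝ) ≤ 2*(d:ℝ)*Creal*(2:ℝ)^(γ:ℝ) := one_le_mul' hA hq1
        exact one_le_mul' hB hqk
      have h := sup_bound d hd p hp (G (k+1) - G k)
        (2*(d:ℝ)*Creal*(2:ℝ)^(γ:ℝ)*((2:ℝ)^(γ:ℝ))^k) hΛ1 (hdl k)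
        (4*Kr*((2:ℝ)^(-α))^k) (by positivity) (hdnorm k) x hx
      rw [Pi.sub_apply] at h
      exact le_trans h (hgeom k)
    -- Cauchy sequence and limit
    have hstep : ∀ x ∈ unitCube d, ∀ k : ℕ, dist (G k x) (G (k+1) x) ≤ C8 * ρ^k := by
      intro x hx k
      rw [Real.dist_eq, abs_sub_comm]
      exact hsb k x hx
    have hcauchy : ∀ x ∈ unitCube d, CauchySeq (fun k => G k x) := fun x hx =>
      cauchySeq_of_le_geometric ρ C8 hρ1 (hstep x hx)
    set g : (Fin d → ℝ) → ℝ := fun x => limUnder atTop (fun k => G k x) with hgdef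
    have htend : ∀ x ∈ unitCube d, Tendsto (fun k => G k x) atTop (𝓝 (g x)) := fun x hx =>
      (hcauchy x hx).tendsto_limUnder
    have hgeo2 : ∀ x ∈ unitCube d, ∀ k, dist (G k x) (g x) ≤ C8 * ρ^k / (1-ρ) := fun x hx k =>
      dist_le_of_le_geometric_of_tendsto ρ C8 hρ1 (hstep x hx) (htend x hx) k
    have hgeo0 : Tendsto (fun k : ℕ => C8 * ρ^k / (1-ρ)) atTop (𝓝 0) := by
      have h1 : Tendsto (fun k : ℕ => ρ^k) atTop (𝓝 0) :=
        tendsto_pow_atTop_nhds_zero_of_lt_one hρ0.le hρ1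
      have h2 := h1.const_mul C8
      rw [mul_zero] at h2
      have h3 := h2.div_const (1-ρ)
      rw [zero_div] at h3
      exact h3
    have huc : TendstoUniformlyOn (fun k x => G k x) g atTop (unitCube d) := by
      rw [Metric.tendstoUniformlyOn_iff]
      intro ε hε
      filter_upwards [hgeo0.eventually (gt_mem_nhds hε)] with k hk x hx
      rw [dist_comm]
      exact lt_of_le_of_lt (hgeo2 x hx k) hk
    have hgcont : ContinuousOn g (unitCube d) :=
      huc.continuousOn (Filter.Eventually.of_forall fun k => (hGcont k).continuousOn).frequently
    -- bound for G 0 and g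
    have hG0norm : eLpNorm (G 0) p' μ ≤ ENNReal.ofReal (3*Kr) := by
      have hrw : G 0 = F - (F - G 0) := by ring
      rw [hrw]
      refine le_trans (eLpNorm_sub_le' hFm (hFm.sub (hGcont 0).aestronglyMeasurable) p') ?_
      have hsum : eLpNorm F p' μ + eLpNorm (F - G 0) p' μ ≤
          1 + ENNReal.ofReal (2*((2:ℝ)^(-α))^0) := add_le_add hΓ1 (hGnorm 0)
      refine le_trans (mul_le_mul hKle hsum zero_le zero_le) ?_
      have h1 : (1 : ℝ≥0∞) + ENNReal.ofReal (2*((2:ℝ)^(-α))^0) = ENNReal.ofReal 3 := by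
        rw [pow_zero, mul_one, ← ENNReal.ofReal_one, ← ENNReal.ofReal_add] <;> norm_num
      rw [h1, ← ENNReal.ofReal_mul (by linarith)]
      apply ENNReal.ofReal_le_ofReal
      linarith
    have hB0 : ∀ x ∈ unitCube d, |G 0 x| ≤
        2*(3*Kr) + 2*((3*Kr) * ((d:ℝ)*Creal*((2:ℝ)^(γ:ℝ))^(0:ℕ)) ^ ((d:ℝ)/p)) ^ (p/(p+(d:ℝ))) := by
      intro x hx
      have hΛ01 : (1:ℝ) ≤ (d:ℝ)*Creal*((2:ℝ)^(γ:ℝ))^(0:ℕ) := by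
        rw [pow_zero, mul_one]
        exact one_le_mul' hd1 hC1
      exact sup_bound d hd p hp (G 0) ((d:ℝ)*Creal*((2:ℝ)^(γ:ℝ))^(0:ℕ)) hΛ01 (hΛlip 0)
        (3*Kr) (by linarith) hG0norm x hx
    have hgb : ∀ x ∈ unitCube d, |g x| ≤ Stot := by
      intro x hx
      have h1 := hgeo2 x hx 0
      rw [pow_zero, mul_one] at h1
      have h2 := hB0 x hx
      have h3 : |g x| ≤ |G 0 x| + dist (G 0 x) (g x) := by
        rw [Real.dist_eq]
        have h4 := abs_sub_abs_le_abs_sub (g x) (G 0 x)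
        rw [abs_sub_comm] at h4
        linarith
      rw [hStotdef]
      refine le_trans ?_ (le_max_right _ _)
      linarith
    -- F = g a.e.
    have hgm : AEStronglyMeasurable g μ := hgcont.aestronglyMeasurable (unitCube_measurable d)
    have hae0 : eLpNorm (F - g) p' μ = 0 := by
      have hDnn : ∀ k : ℕ, (0:ℝ) ≤ C8*ρ^k/(1-ρ) := by
        intro k
        apply div_nonneg
        · have := pow_nonneg hρ0.le k
          nlinarith
        · linarith
      have hbndk : ∀ k : ℕ, eLpNorm (F - g) p' μ ≤
          ENNReal.ofReal (Kr * (2*((2:ℝ)^(-α))^k + C8*ρ^k/(1-ρ))) := by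
        intro k
        have hrw : F - g = (F - G k) + (G k - g) := by ring
        rw [hrw]
        refine le_trans (eLpNorm_add_le' (hFm.sub (hGcont k).aestronglyMeasurable)
          (((hGcont k).aestronglyMeasurable).sub hgm) p') ?_
        have h2 : eLpNorm (G k - g) p' μ ≤ ENNReal.ofReal (C8*ρ^k/(1-ρ)) := by
          have hbd : ∀ᵐ x ∂μ, ‖(G k - g) x‖ ≤ C8*ρ^k/(1-ρ) := by
            filter_upwards [ae_restrict_mem (unitCube_measurable d)] with x hx
            rw [Pi.sub_apply, Real.norm_eq_abs, ← Real.dist_eq]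
            exact hgeo2 x hx k
          refine le_trans (eLpNorm_le_of_ae_bound hbd) ?_
          rw [hμuniv, ENNReal.one_rpow, one_mul]
        refine le_trans (mul_le_mul hKle (add_le_add (hGnorm k) h2)
          zero_le zero_le) ?_
        rw [← ENNReal.ofReal_add (by positivity) (hDnn k),
          ← ENNReal.ofReal_mul (by linarith)]
      have hw0 : Tendsto (fun k : ℕ => Kr * (2*((2:ℝ)^(-α))^k + C8*ρ^k/(1-ρ)))
          atTop (𝓝 0) := by
        have h1 : Tendsto (fun k : ℕ => ((2:ℝ)^(-α))^k) atTop (𝓝 0) :=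
          tendsto_pow_atTop_nhds_zero_of_lt_one ha0.le ha1
        have h2 := (h1.const_mul 2).add hgeo0
        have h3 := h2.const_mul Kr
        simpa using h3
      have hw0' : Tendsto (fun k : ℕ =>
          ENNReal.ofReal (Kr * (2*((2:ℝ)^(-α))^k + C8*ρ^k/(1-ρ)))) atTop (𝓝 0) := by
        have := ENNReal.tendsto_ofReal hw0
        simpa using this
      exact le_antisymm (ge_of_tendsto hw0' (Filter.Eventually.of_forall hbndk)) zero_le
    have hFg : F =ᵐ[μ] g := by
      have h0 := (eLpNorm_eq_zero_iff (hFm.sub hgm) hp'0).mp hae0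
      filter_upwards [h0] with x hx
      have hx' : F x - g x = 0 := by simpa using hx
      linarith
    have hfg : f =ᵐ[μ] fun x => θ * g x := by
      filter_upwards [hFg] with x hx
      have h1 : f x = θ * F x := by
        rw [hFdef]
        field_simp
      rw [h1, hx]
    refine ⟨⟨fun x => θ * g x, continuousOn_const.mul hgcont, hfg⟩, ?_⟩
    rw [eLpNorm_congr_ae hfg]
    have hbd : ∀ᵐ x ∂μ, ‖θ * g x‖ ≤ θ * Stot := by
      filter_upwards [ae_restrict_mem (unitCube_measurable d)] with x hx
      rw [Real.norm_eq_abs, abs_mul, abs_of_pos hθ]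
      exact mul_le_mul_of_nonneg_left (hgb x hx) hθ.le
    refine le_trans (eLpNorm_le_of_ae_bound hbd) ?_
    rw [hμuniv, ENNReal.one_rpow, one_mul, mul_comm θ Stot,
      ENNReal.ofReal_mul (by linarith : (0:ℝ) ≤ Stot)]
  -- conclude
  refine ⟨ENNReal.ofReal Stot, by simp [ENNReal.ofReal_pos]; linarith,
    ENNReal.ofReal_lt_top, fun f hf => ?_⟩
  obtain ⟨hfL, hAn⟩ := hf
  have hfm : AEStronglyMeasurable f μ := hfL.aestronglyMeasurable
  set S := {t : ℝ≥0∞ | ∃ θ : ℝ, 0 < θ ∧ t = ENNReal.ofReal θ ∧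
    Gamma d ℓf (fun n => (cf n : ℝ≥0∞)) (unitCube d) p' α (fun x => f x / θ) ≤ 1} with hSdef
  have hANorm : ANorm d ℓf (fun n => (cf n : ℝ≥0∞)) (unitCube d) p' α f = sInf S := rfl
  have hSne : S.Nonempty := by
    by_contra hSe
    rw [Set.not_nonempty_iff_eq_empty] at hSe
    rw [hANorm, hSe, sInf_empty] at hAn
    exact absurd hAn (lt_irrefl ⊤)
  obtain ⟨t0, θ0, hθ0, ht0eq, hΓ0⟩ := hSne
  constructor
  · exact (main_step f hfm θ0 hθ0 hΓ0).1
  · rw [hANorm]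
    have hC0 : (ENNReal.ofReal Stot) ≠ 0 := by
      simp only [ne_eq, ENNReal.ofReal_eq_zero, not_le]
      linarith
    have hCt : (ENNReal.ofReal Stot) ≠ ⊤ := ENNReal.ofReal_ne_top
    have hall : ∀ t ∈ S, eLpNorm f ⊤ μ / ENNReal.ofReal Stot ≤ t := by
      rintro t ⟨θ, hθ, rfl, hΓ⟩
      rw [ENNReal.div_le_iff_le_mul (Or.inl hC0) (Or.inl hCt)]
      rw [mul_comm]
      exact (main_step f hfm θ hθ hΓ).2
    have hsinf : eLpNorm f ⊤ μ / ENNReal.ofReal Stot ≤ sInf S := le_sInf hall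
    rw [ENNReal.div_le_iff_le_mul (Or.inl hC0) (Or.inl hCt)] at hsinf
    rwa [mul_comm] at hsinf
end

section
/- For any non-decreasing functions ℓ : ℕ → ℕ_{≥2} ∪ {∞} and c : ℕ → ℕ ∪ {∞}, the two complexity exponents coincide: γ*(ℓ,c) = γ◇(ℓ,c). -/
open MeasureTheory Filter
open scoped ENNReal NNReal Classical

section AuxGamma

private lemma aux_rpow_tendsto_top {δ : ℝ} (hδ : 0 < δ) :
    Tendsto (fun n : ℕ => (n : ℝ≥0∞) ^ δ) atTop (nhds ⊤) :=
  (ENNReal.tendsto_rpow_at_top hδ).comp ENNReal.tendsto_nat_nhds_top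

private lemma aux_tendsto_zero {δ : ℝ} (hδ : 0 < δ) (C : ℝ≥0∞) (hC : C ≠ ⊤) :
    Tendsto (fun n : ℕ => C * (n : ℝ≥0∞) ^ (-δ)) atTop (nhds 0) := by
  have h1 : Tendsto (fun n : ℕ => (n : ℝ≥0∞) ^ (-δ)) atTop (nhds 0) := by
    simp only [ENNReal.rpow_neg]
    rw [show (0:ℝ≥0∞) = ⊤⁻¹ by simp]
    exact ENNReal.tendsto_inv_iff.2 (aux_rpow_tendsto_top hδ)
  simpa using ENNReal.Tendsto.const_mul h1 (Or.inr hC)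

end AuxGamma

private theorem gammaStar_eq_gammaDiamond'
    (lstar : ℕ∞)
    (ℓf cf : ℕ → ℕ∞)
    (hcmono : Monotone cf)
    (hl2 : 2 ≤ lstar) (hc1 : ∀ n, 1 ≤ cf n) :
    (sSup {t : ℝ≥0∞ | ∃ γ : ℝ, 0 ≤ γ ∧ t = ENNReal.ofReal γ ∧
      ∃ L : ℕ, 1 ≤ L ∧ (L : ℕ∞) ≤ lstar ∧
        0 < Filter.limsup
          (fun n : ℕ => (cf n : ℝ≥0∞) ^ L * (n : ℝ≥0∞) ^ (L / 2) / (n : ℝ≥0∞) ^ (γ : ℝ))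
          Filter.atTop}) =
    (sInf {t : ℝ≥0∞ | ∃ γ : ℝ, 0 ≤ γ ∧ t = ENNReal.ofReal γ ∧
      ∃ C : ℝ, 0 < C ∧ ∀ n : ℕ, 1 ≤ n → ∀ L : ℕ, 1 ≤ L → (L : ℕ∞) ≤ lstar →
        (cf n : ℝ≥0∞) ^ L * (n : ℝ≥0∞) ^ (L / 2) ≤ ENNReal.ofReal C * (n : ℝ≥0∞) ^ (γ : ℝ)}) := by
  set a : ℕ → ℕ → ℝ≥0∞ := fun L n => (cf n : ℝ≥0∞) ^ L * (n : ℝ≥0∞) ^ (L / 2) with ha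
  have hc1' : ∀ n, (1:ℝ≥0∞) ≤ (cf n : ℝ≥0∞) := fun n => by exact_mod_cast hc1 n
  have ha1 : ∀ (L n : ℕ), 1 ≤ n → (n : ℝ≥0∞) ^ (L / 2) ≤ a L n := by
    intro L n hn
    exact le_mul_of_one_le_left (zero_le) (one_le_pow_of_one_le' (hc1' n) L)
  have hnpos : ∀ {n : ℕ}, 1 ≤ n → ((n : ℝ≥0∞) ≠ 0) := by
    intro n hn
    exact Nat.cast_ne_zero.mpr (by omega)
  have hrpow_ne_top : ∀ (n : ℕ) (γ : ℝ), 0 ≤ γ → (n : ℝ≥0∞) ^ (γ : ℝ) ≠ ⊤ := by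
    intro n γ hγ
    exact (ENNReal.rpow_lt_top_of_nonneg hγ (ENNReal.natCast_ne_top n)).ne
  have hrpow_ne_zero : ∀ (n : ℕ), 1 ≤ n → ∀ (γ : ℝ), (n : ℝ≥0∞) ^ (γ : ℝ) ≠ 0 := by
    intro n hn γ
    exact (ENNReal.rpow_pos (by exact_mod_cast Nat.pos_of_ne_zero (by omega)) (ENNReal.natCast_ne_top n)).ne'
  apply le_antisymm
  · -- easy direction
    refine sSup_le fun t ht => le_sInf fun s hs => ?_
    obtain ⟨γ, hγ0, rfl, L, hL1, hLle, hlimsup⟩ := ht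
    obtain ⟨γ', hγ'0, rfl, C, hC0, hbound⟩ := hs
    rw [ENNReal.ofReal_le_ofReal_iff hγ'0]
    by_contra hlt
    push_neg at hlt
    have hev : ∀ᶠ n : ℕ in atTop, a L n / (n:ℝ≥0∞) ^ (γ:ℝ)
        ≤ ENNReal.ofReal C * (n:ℝ≥0∞) ^ (-(γ - γ')) := by
      filter_upwards [eventually_ge_atTop 1] with n hn
      calc a L n / (n:ℝ≥0∞) ^ (γ:ℝ)
          ≤ (ENNReal.ofReal C * (n:ℝ≥0∞) ^ (γ':ℝ)) / (n:ℝ≥0∞) ^ (γ:ℝ) :=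
            ENNReal.div_le_div_right (hbound n hn L hL1 hLle) _
        _ = ENNReal.ofReal C * ((n:ℝ≥0∞) ^ (γ':ℝ) / (n:ℝ≥0∞) ^ (γ:ℝ)) := by
            rw [mul_div_assoc]
        _ = ENNReal.ofReal C * (n:ℝ≥0∞) ^ (γ' - γ) := by
            rw [← ENNReal.rpow_sub _ _ (hnpos hn) (ENNReal.natCast_ne_top n)]
        _ = _ := by rw [neg_sub]
    have h0 : limsup (fun n : ℕ => a L n / (n:ℝ≥0∞) ^ (γ:ℝ)) atTop ≤ 0 := by
      calc limsup (fun n : ℕ => a L n / (n:ℝ≥0∞) ^ (γ:ℝ)) atTop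
          ≤ limsup (fun n : ℕ => ENNReal.ofReal C * (n:ℝ≥0∞) ^ (-(γ - γ'))) atTop :=
            Filter.limsup_le_limsup hev
        _ = 0 := (aux_tendsto_zero (by linarith) _ ENNReal.ofReal_ne_top).limsup_eq
    exact hlimsup.not_ge h0
  · -- hard direction
    set Sstar := {t : ℝ≥0∞ | ∃ γ : ℝ, 0 ≤ γ ∧ t = ENNReal.ofReal γ ∧
      ∃ L : ℕ, 1 ≤ L ∧ (L : ℕ∞) ≤ lstar ∧
        0 < Filter.limsup (fun n : ℕ => a L n / (n : ℝ≥0∞) ^ (γ : ℝ)) Filter.atTop} with hSstar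
    have htopOf : (∀ γ : ℝ, 0 ≤ γ → ENNReal.ofReal γ ∈ Sstar) → sSup Sstar = ⊤ := by
      intro h
      by_contra hne
      obtain ⟨m, hm⟩ := ENNReal.exists_nat_gt hne
      have h2 := le_sSup (h m (Nat.cast_nonneg m))
      rw [ENNReal.ofReal_natCast] at h2
      exact absurd (h2.trans_lt hm) (lt_irrefl _)
    by_cases hcf : ∃ n0, 1 ≤ n0 ∧ cf n0 = ⊤
    · -- cf hits ⊤ : gammaStar = ⊤
      obtain ⟨n0, hn01, hn0top⟩ := hcf
      have htop : sSup Sstar = ⊤ := by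
        apply htopOf
        intro γ hγ
        refine ⟨γ, hγ, rfl, 1, le_refl 1, le_trans (by exact_mod_cast one_le_two) hl2, ?_⟩
        refine lt_of_lt_of_le zero_lt_one (Filter.le_limsup_of_frequently_le ?_)
        apply Filter.Eventually.frequently
        filter_upwards [eventually_ge_atTop n0] with n hn
        have hcn : (cf n : ℝ≥0∞) = ⊤ := by
          have : cf n = ⊤ := top_le_iff.mp (hn0top ▸ hcmono hn)
          rw [this]; exact ENat.toENNReal_top
        have ha' : a 1 n = ⊤ := by
          simp [ha, hcn]
        rw [ha', ENNReal.top_div_of_ne_top (hrpow_ne_top n γ hγ)]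
        exact le_top
      exact htop ▸ le_top
    · by_cases hltop : lstar = ⊤
      · -- lstar = ⊤ : gammaStar = ⊤
        have htop : sSup Sstar = ⊤ := by
          apply htopOf
          intro γ hγ
          set L := 2 * (⌈γ⌉₊ + 1) with hL
          have hL1 : 1 ≤ L := by omega
          have hL2 : L / 2 = ⌈γ⌉₊ + 1 := by omega
          refine ⟨γ, hγ, rfl, L, hL1, hltop ▸ le_top, ?_⟩
          refine lt_of_lt_of_le zero_lt_one (Filter.le_limsup_of_frequently_le ?_)
          apply Filter.Eventually.frequently
          filter_upwards [eventually_ge_atTop 1] with n hn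
          rw [ENNReal.le_div_iff_mul_le (Or.inl (hrpow_ne_zero n hn γ))
            (Or.inl (hrpow_ne_top n γ hγ)), one_mul]
          calc (n:ℝ≥0∞) ^ (γ:ℝ) ≤ (n:ℝ≥0∞) ^ ((L / 2 : ℕ) : ℝ) := by
                apply ENNReal.rpow_le_rpow_of_exponent_le (by exact_mod_cast hn)
                rw [hL2]
                push_cast
                have := Nat.le_ceil γ
                linarith
            _ = (n:ℝ≥0∞) ^ (L / 2) := ENNReal.rpow_natCast _ _
            _ ≤ a L n := ha1 L n hn
        exact htop ▸ le_top
      · -- main case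
        push_neg at hcf
        have hcffin : ∀ n, 1 ≤ n → (cf n : ℝ≥0∞) ≠ ⊤ := by
          intro n hn
          have h1 := hcf n hn
          lift cf n to ℕ using h1 with m hm
          simp
        obtain ⟨K, hK0⟩ := Option.ne_none_iff_exists.mp hltop
        have hK : lstar = (K : ℕ∞) := by rw [← hK0]; rfl
        set g := sSup Sstar with hg
        by_cases hgtop : g = ⊤
        · exact hgtop ▸ le_top
        refine ENNReal.le_of_forall_pos_le_add fun ε hε _ => ?_
        set γ : ℝ := g.toReal + ε with hγdef
        have hγ0 : 0 ≤ γ := by positivity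
        have hofγ : ENNReal.ofReal γ = g + (ε : ℝ≥0∞) := by
          rw [hγdef, ENNReal.ofReal_add ENNReal.toReal_nonneg ε.coe_nonneg,
            ENNReal.ofReal_toReal hgtop, ENNReal.ofReal_coe_nnreal]
        -- Step 1: each limsup is < 1
        have hstep1 : ∀ L : ℕ, 1 ≤ L → (L : ℕ∞) ≤ lstar →
            limsup (fun n : ℕ => a L n / (n : ℝ≥0∞) ^ (γ:ℝ)) atTop < 1 := by
          intro L hL1 hLle
          by_contra hnot
          push_neg at hnot
          have hmem : ENNReal.ofReal γ ∈ Sstar :=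
            ⟨γ, hγ0, rfl, L, hL1, hLle, lt_of_lt_of_le zero_lt_one hnot⟩
          have hle : ENNReal.ofReal γ ≤ g := le_sSup hmem
          rw [hofγ] at hle
          exact absurd hle (ENNReal.lt_add_right hgtop (b := (ε : ℝ≥0∞)) (by exact_mod_cast hε.ne')).not_ge
        -- Step 2: find uniform N
        have hstep2 : ∀ᶠ n : ℕ in atTop, ∀ L ∈ Finset.Icc 1 K,
            a L n / (n : ℝ≥0∞) ^ (γ:ℝ) < 1 := by
          rw [Filter.eventually_all_finset]
          intro L hL
          rw [Finset.mem_Icc] at hL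
          have hLle : (L : ℕ∞) ≤ lstar := by
            rw [hK]
            exact_mod_cast hL.2
          exact Filter.eventually_lt_of_limsup_lt (hstep1 L hL.1 hLle)
        obtain ⟨N, hN⟩ := Filter.eventually_atTop.mp hstep2
        -- Step 3: bound on initial segment
        set M : ℝ≥0∞ := (Finset.Icc 1 N ×ˢ Finset.Icc 1 K).sup (fun p => a p.2 p.1) with hM
        have hMlt : M < ⊤ := by
          rw [hM, Finset.sup_lt_iff (by simp)]
          rintro ⟨n, L⟩ hp
          rw [Finset.mem_product, Finset.mem_Icc, Finset.mem_Icc] at hp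
          exact ENNReal.mul_lt_top
            (ENNReal.pow_lt_top (lt_top_iff_ne_top.2 (hcffin n hp.1.1)))
            (ENNReal.pow_lt_top (lt_top_iff_ne_top.2 (ENNReal.natCast_ne_top n)))
        set C : ℝ := M.toReal + 1 with hC
        have hC0 : 0 < C := by positivity
        have hC1 : (1:ℝ≥0∞) ≤ ENNReal.ofReal C := by
          rw [← ENNReal.ofReal_one]
          exact ENNReal.ofReal_le_ofReal (by simp [hC, ENNReal.toReal_nonneg])
        have hMC : M ≤ ENNReal.ofReal C := by
          rw [← ENNReal.ofReal_toReal hMlt.ne]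
          exact ENNReal.ofReal_le_ofReal (by simp [hC])
        have hfinal : ∀ n : ℕ, 1 ≤ n → ∀ L : ℕ, 1 ≤ L → (L : ℕ∞) ≤ lstar →
            a L n ≤ ENNReal.ofReal C * (n : ℝ≥0∞) ^ (γ:ℝ) := by
          intro n hn L hL1 hLle
          have hLK : L ≤ K := by
            rw [hK] at hLle
            exact_mod_cast hLle
          have hone_le : (1:ℝ≥0∞) ≤ (n : ℝ≥0∞) ^ (γ:ℝ) := by
            calc (1:ℝ≥0∞) = (n:ℝ≥0∞) ^ (0:ℝ) := by rw [ENNReal.rpow_zero]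
              _ ≤ (n:ℝ≥0∞) ^ (γ:ℝ) :=
                ENNReal.rpow_le_rpow_of_exponent_le (by exact_mod_cast hn) hγ0
          rcases le_or_gt N n with hn' | hn'
          · have := hN n hn' L (Finset.mem_Icc.mpr ⟨hL1, hLK⟩)
            rw [ENNReal.div_lt_iff (Or.inl (hrpow_ne_zero n hn γ))
              (Or.inl (hrpow_ne_top n γ hγ0))] at this
            rw [one_mul] at this
            calc a L n ≤ (n : ℝ≥0∞) ^ (γ:ℝ) := this.le
              _ ≤ ENNReal.ofReal C * (n : ℝ≥0∞) ^ (γ:ℝ) :=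
                le_mul_of_one_le_left (zero_le) hC1
          · have hmem : (n, L) ∈ Finset.Icc 1 N ×ˢ Finset.Icc 1 K := by
              rw [Finset.mem_product, Finset.mem_Icc, Finset.mem_Icc]
              exact ⟨⟨hn, hn'.le⟩, ⟨hL1, hLK⟩⟩
            calc a L n ≤ M := Finset.le_sup (f := fun p => a p.2 p.1) hmem
              _ ≤ ENNReal.ofReal C := hMC
              _ ≤ ENNReal.ofReal C * (n : ℝ≥0∞) ^ (γ:ℝ) :=
                le_mul_of_one_le_right (zero_le) hone_le
        refine le_trans (sInf_le ?_) hofγ.le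
        exact ⟨γ, hγ0, rfl, C, hC0, hfinal⟩

/-- Lemma 2.2 / `lem:GammaProperties`, first part: the complexity
exponents coincide, `γ*(ℓ,c) = γ◇(ℓ,c)`. -/
theorem gammaStar_eq_gammaDiamond
    (ℓf cf : ℕ → ℕ∞)
    (hℓmono : Monotone ℓf) (hcmono : Monotone cf)
    (hℓ2 : ∀ n, 2 ≤ ℓf n) (hc1 : ∀ n, 1 ≤ cf n) :
    gammaStar ℓf (fun n => (cf n : ℝ≥0∞)) = gammaDiamond ℓf (fun n => (cf n : ℝ≥0∞)) := by
  have hl2 : 2 ≤ lstar ℓf := le_trans (hℓ2 0) (le_iSup ℓf 0)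
  exact gammaStar_eq_gammaDiamond' (lstar ℓf) ℓf cf hcmono hl2 hc1
end

section
/- Let p ∈ (0,∞) and d ∈ ℕ. There exists a constant C = C(d,p) > 0 such that for every T ∈ (0,1] and every Lipschitz continuous function f : [0,1]^d → ℝ, one has ‖f‖_{L^∞([0,1]^d)} ≤ C·(T^{−d/p}·‖f‖_{L^p([0,1]^d)} + T·Lip(f)). -/
open MeasureTheory Filter
open scoped ENNReal NNReal Classical

/-- Lemma 3.2 / `lem:LipschitzLpVersusLInfty`: there is `C = C(d,p) > 0`
such that for all `T ∈ (0,1]` and all Lipschitz `f : [0,1]^d → ℝ`,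
`‖f‖_{L^∞} ≤ C·(T^{−d/p}·‖f‖_{L^p} + T·Lip(f))`. -/
theorem sup_le_Lp_add_lipschitz
    (d : ℕ) (hd : 0 < d) (p : ℝ) (hp : 0 < p) :
    ∃ C : ℝ, 0 < C ∧
      ∀ T : ℝ, 0 < T → T ≤ 1 →
        ∀ f : (Fin d → ℝ) → ℝ, eLip d 1 f < ⊤ →
          supNormCube d f ≤ ENNReal.ofReal C *
            (ENNReal.ofReal (T ^ (-(d : ℝ) / p))
                * eLpNorm f (ENNReal.ofReal p) (volume.restrict (unitCube d))
              + ENNReal.ofReal T * eLip d 1 f) := by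
  refine ⟨1, one_pos, ?_⟩
  intro T hT hT1 f hf
  rw [ENNReal.ofReal_one, one_mul, supNormCube]
  refine iSup₂_le fun x hx => ?_
  set L : ℝ := (eLip d 1 f).toReal with hLdef
  have hL0 : 0 ≤ L := ENNReal.toReal_nonneg
  have hLipEq : eLip d 1 f = ENNReal.ofReal L := (ENNReal.ofReal_toReal hf.ne).symm
  -- Lipschitz bound on the cube
  have hLip : ∀ y ∈ unitCube d, |f x - f y| ≤ L * dist x y := by
    intro y hy
    rcases eq_or_ne x y with rfl | hxy
    · simp [mul_nonneg hL0 dist_nonneg]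
    · have h1 : ENNReal.ofReal (|f x - f y| / dist x y ^ (1:ℝ)) ≤ eLip d 1 f := by
        refine le_iSup₂_of_le x hx ?_
        refine le_iSup₂_of_le y hy ?_
        exact le_iSup_of_le hxy le_rfl
      have h2 : |f x - f y| / dist x y ^ (1:ℝ) ≤ L :=
        (ENNReal.ofReal_le_iff_le_toReal hf.ne).mp h1
      rw [Real.rpow_one] at h2
      have hd0 : 0 < dist x y := dist_pos.mpr hxy
      calc |f x - f y| = |f x - f y| / dist x y * dist x y := by field_simp
        _ ≤ L * dist x y := mul_le_mul_of_nonneg_right h2 dist_nonneg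
  obtain ⟨hx0, hx1⟩ := hx
  -- the small cube Q
  set y₀ : Fin d → ℝ := fun j => min (x j) (1 - T) with hy₀
  set y₁ : Fin d → ℝ := fun j => y₀ j + T with hy₁
  set Q : Set (Fin d → ℝ) := Set.Icc y₀ y₁ with hQ
  have hQsub : Q ⊆ unitCube d := by
    intro y hy
    obtain ⟨h1, h2⟩ := hy
    constructor <;> intro j
    · have := h1 j
      have := hx0 j
      simp only [hy₀, Pi.zero_apply] at *
      have h1T : (0:ℝ) ≤ 1 - T := by linarith
      calc (0:ℝ) ≤ min (x j) (1 - T) := le_min (hx0 j) h1T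
        _ ≤ y j := h1 j
    · have := h2 j
      simp only [hy₁, hy₀, Pi.one_apply] at *
      have : min (x j) (1 - T) + T ≤ 1 := by
        have := min_le_right (x j) (1 - T)
        linarith
      linarith
  have hxQ : x ∈ Q := by
    constructor <;> intro j
    · exact min_le_left _ _
    · simp only [hy₁, hy₀]
      rcases le_total (x j) (1 - T) with h | h
      · rw [min_eq_left h]; linarith
      · rw [min_eq_right h]
        have h1 : x j ≤ 1 := by have := hx1 j; simpa using this
        linarith
  have hdistQ : ∀ y ∈ Q, dist x y ≤ T := by
    intro y hy
    rw [dist_pi_le_iff hT.le]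
    intro j
    rw [Real.dist_eq, abs_sub_le_iff]
    have h1 := hy.1 j; have h2 := hy.2 j
    have h3 := hxQ.1 j; have h4 := hxQ.2 j
    simp only [hy₁] at *
    constructor <;> linarith
  have hvolQ : volume Q = ENNReal.ofReal T ^ d := by
    rw [hQ, Real.volume_Icc_pi]
    simp [hy₁]
  -- pointwise lower bound on Q
  set M : ℝ := |f x| - T * L with hM
  have hfy : ∀ y ∈ Q, M ≤ |f y| := by
    intro y hy
    have h1 : |f x - f y| ≤ L * T := le_trans (hLip y (hQsub hy))
      (mul_le_mul_of_nonneg_left (hdistQ y hy) hL0)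
    have := abs_sub_abs_le_abs_sub (f x) (f y)
    simp only [hM]; linarith
  -- Lp norm lower bound
  set P : ℝ≥0∞ := ENNReal.ofReal p with hP
  have hP0 : P ≠ 0 := by simp [hP, ENNReal.ofReal_eq_zero, not_le, hp]
  have hPtop : P ≠ ⊤ := ENNReal.ofReal_ne_top
  have hPt : P.toReal = p := ENNReal.toReal_ofReal hp.le
  have hQmeas : MeasurableSet Q := measurableSet_Icc
  have key : ENNReal.ofReal M * ENNReal.ofReal T ^ ((d:ℝ)/p)
      ≤ eLpNorm f P (volume.restrict (unitCube d)) := by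
    have hmono : eLpNorm f P (volume.restrict Q)
        ≤ eLpNorm f P (volume.restrict (unitCube d)) :=
      eLpNorm_mono_measure f (Measure.restrict_mono hQsub le_rfl)
    refine le_trans ?_ hmono
    rw [eLpNorm_eq_lintegral_rpow_enorm_toReal hP0 hPtop, hPt]
    have hint : ENNReal.ofReal M ^ p * volume Q
        ≤ ∫⁻ a, (‖f a‖₊ : ℝ≥0∞) ^ p ∂(volume.restrict Q) := by
      have : ∫⁻ _, ENNReal.ofReal M ^ p ∂(volume.restrict Q)
          = ENNReal.ofReal M ^ p * volume Q := by
        rw [lintegral_const, Measure.restrict_apply_univ]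
      rw [← this]
      refine lintegral_mono_ae ?_
      rw [ae_restrict_iff' hQmeas]
      refine ae_of_all _ fun y hy => ?_
      refine ENNReal.rpow_le_rpow ?_ hp.le
      rw [← enorm_eq_nnnorm, ← ofReal_norm, Real.norm_eq_abs]
      exact ENNReal.ofReal_le_ofReal (hfy y hy)
    calc ENNReal.ofReal M * ENNReal.ofReal T ^ ((d:ℝ)/p)
        = (ENNReal.ofReal M ^ p * volume Q) ^ (1/p) := by
          rw [hvolQ, ← ENNReal.rpow_natCast (ENNReal.ofReal T) d,
            ENNReal.mul_rpow_of_nonneg _ _ (by positivity : (0:ℝ) ≤ 1/p),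
            ← ENNReal.rpow_mul, ← ENNReal.rpow_mul]
          rw [mul_one_div, div_self hp.ne', ENNReal.rpow_one, mul_one_div]
      _ ≤ _ := ENNReal.rpow_le_rpow hint (by positivity)
  -- conclude
  have hstep1 : ENNReal.ofReal M ≤ ENNReal.ofReal (T ^ (-(d : ℝ) / p)) *
      eLpNorm f P (volume.restrict (unitCube d)) := by
    have hTr : ENNReal.ofReal (T ^ (-(d : ℝ) / p)) = ENNReal.ofReal T ^ (-(d:ℝ)/p) :=
      (ENNReal.ofReal_rpow_of_pos hT).symm
    calc ENNReal.ofReal M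
        = ENNReal.ofReal T ^ (-(d:ℝ)/p) * (ENNReal.ofReal M * ENNReal.ofReal T ^ ((d:ℝ)/p)) := by
          rw [← mul_assoc, mul_comm (ENNReal.ofReal T ^ (-(d:ℝ)/p)), mul_assoc,
            ← ENNReal.rpow_add _ _ (by simp [hT]) ENNReal.ofReal_ne_top]
          norm_num
          rw [neg_div, neg_add_cancel, ENNReal.rpow_zero, mul_one]
      _ ≤ _ := by
          rw [hTr]
          exact mul_le_mul_right key _
  have hstep2 : ENNReal.ofReal (T * L) ≤ ENNReal.ofReal T * eLip d 1 f := by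
    rw [hLipEq, ← ENNReal.ofReal_mul hT.le]
  have hfx : |f x| = M + T * L := by simp [hM]
  rw [hfx]
  exact le_trans ENNReal.ofReal_add_le (add_le_add hstep1 hstep2)
end

section
/- Let d ∈ ℕ, let ℓ : ℕ → ℕ_{≥2} ∪ {∞} and c : ℕ → [1,∞] be given, and let n ∈ ℕ be such that L := ℓ(n) and C := c(n) are finite. Then every F ∈ Σ_n (i.e., every function F = R_ρΦ realized by a ReLU network Φ with input dimension d, output dimension 1, W(Φ) ≤ n, L(Φ) ≤ L, and ‖Φ‖_NN ≤ C) satisfies Lip(F) ≤ d·C^L·n^{⌊L/2⌋}, where Lip is taken with respect to the ℓ∞ norm on [0,1]^d. -/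
open MeasureTheory Filter
open scoped ENNReal NNReal Classical

noncomputable section LipAux

namespace NeuralNet

variable {d : ℕ}

/-- Recursive bound on the Lipschitz constants of the hidden layers. -/
def rowBound (Φ : NeuralNet d) : (k : ℕ) → Fin (Φ.N k) → ℝ
  | 0 => fun _ => 1
  | k + 1 => fun i => ∑ j, |Φ.A k i j| * Φ.rowBound k j

lemma rowBound_nonneg (Φ : NeuralNet d) : ∀ k i, 0 ≤ Φ.rowBound k i
  | 0, _ => zero_le_one
  | k + 1, _ =>
    Finset.sum_nonneg fun j _ => mul_nonneg (abs_nonneg _) (Φ.rowBound_nonneg k j)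

lemma mulVec_diff_le (Φ : NeuralNet d) (x y : Fin d → ℝ) (k : ℕ)
    (hk : ∀ i, |Φ.hidden k x i - Φ.hidden k y i| ≤ Φ.rowBound k i * dist x y)
    (i : Fin (Φ.N (k + 1))) :
    |(Φ.A k).mulVec (Φ.hidden k x) i - (Φ.A k).mulVec (Φ.hidden k y) i| ≤
      Φ.rowBound (k + 1) i * dist x y := by
  have h1 : (Φ.A k).mulVec (Φ.hidden k x) i - (Φ.A k).mulVec (Φ.hidden k y) i =
      ∑ j, Φ.A k i j * (Φ.hidden k x j - Φ.hidden k y j) := by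
    simp [Matrix.mulVec, dotProduct, mul_sub, Finset.sum_sub_distrib]
  rw [h1]
  calc |∑ j, Φ.A k i j * (Φ.hidden k x j - Φ.hidden k y j)|
      ≤ ∑ j, |Φ.A k i j * (Φ.hidden k x j - Φ.hidden k y j)| :=
        Finset.abs_sum_le_sum_abs _ _
    _ ≤ ∑ j, |Φ.A k i j| * (Φ.rowBound k j * dist x y) := by
        refine Finset.sum_le_sum fun j _ => ?_
        rw [abs_mul]
        exact mul_le_mul_of_nonneg_left (hk j) (abs_nonneg _)
    _ = Φ.rowBound (k + 1) i * dist x y := by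
        simp [rowBound, Finset.sum_mul, mul_assoc]

lemma hidden_lipschitz (Φ : NeuralNet d) (x y : Fin d → ℝ) :
    ∀ k i, |Φ.hidden k x i - Φ.hidden k y i| ≤ Φ.rowBound k i * dist x y := by
  intro k
  induction k with
  | zero =>
    intro i
    simpa [hidden, rowBound, Real.dist_eq] using dist_le_pi_dist x y (Fin.cast Φ.hN0 i)
  | succ k ih =>
    intro i
    have h2 : |Φ.hidden (k + 1) x i - Φ.hidden (k + 1) y i| ≤
        |((Φ.A k).mulVec (Φ.hidden k x) i + Φ.b k i) -
          ((Φ.A k).mulVec (Φ.hidden k y) i + Φ.b k i)| := by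
      simpa [hidden, relu, max_comm (0 : ℝ)] using
        abs_max_sub_max_le_abs ((Φ.A k).mulVec (Φ.hidden k x) i + Φ.b k i)
          ((Φ.A k).mulVec (Φ.hidden k y) i + Φ.b k i) 0
    refine h2.trans ?_
    rw [add_sub_add_right_eq_sub]
    exact Φ.mulVec_diff_le x y k ih i

/-- Total absolute sum of one weight matrix, bounded via sparsity. -/
lemma abs_sum_A_le (Φ : NeuralNet d) (n : ℕ) (hW : Φ.weightCount ≤ n)
    (c : ℝ) (hc : 0 ≤ c) (k : ℕ) (hk : k < Φ.L)
    (hA : ∀ i j, |Φ.A k i j| ≤ c) :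
    ∑ i, ∑ j, |Φ.A k i j| ≤ c * n := by
  have hcard : (Finset.univ.filter fun ij : Fin (Φ.N (k + 1)) × Fin (Φ.N k) =>
      Φ.A k ij.1 ij.2 ≠ 0).card ≤ n := by
    refine le_trans ?_ hW
    unfold weightCount
    refine le_trans (Nat.le_add_right _
      (Finset.univ.filter fun i : Fin (Φ.N (k + 1)) => Φ.b k i ≠ 0).card) ?_
    exact Finset.single_le_sum
      (f := fun ℓ => (Finset.univ.filter fun ij : Fin (Φ.N (ℓ + 1)) × Fin (Φ.N ℓ) =>
          Φ.A ℓ ij.1 ij.2 ≠ 0).card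
        + (Finset.univ.filter fun i : Fin (Φ.N (ℓ + 1)) => Φ.b ℓ i ≠ 0).card)
      (fun _ _ => Nat.zero_le _) (Finset.mem_range.2 hk)
  have heq : ∑ i, ∑ j, |Φ.A k i j| =
      ∑ ij ∈ (Finset.univ.filter fun ij : Fin (Φ.N (k + 1)) × Fin (Φ.N k) =>
        Φ.A k ij.1 ij.2 ≠ 0), |Φ.A k ij.1 ij.2| := by
    rw [show (∑ i, ∑ j, |Φ.A k i j|) =
        ∑ ij : Fin (Φ.N (k + 1)) × Fin (Φ.N k), |Φ.A k ij.1 ij.2| from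
      (Fintype.sum_prod_type (f := fun ij : Fin (Φ.N (k + 1)) × Fin (Φ.N k) =>
        |Φ.A k ij.1 ij.2|)).symm]
    refine (Finset.sum_filter_of_ne fun ij _ h => ?_).symm
    intro h0
    exact h (by rw [h0, abs_zero])
  rw [heq]
  calc ∑ ij ∈ (Finset.univ.filter fun ij : Fin (Φ.N (k + 1)) × Fin (Φ.N k) =>
        Φ.A k ij.1 ij.2 ≠ 0), |Φ.A k ij.1 ij.2|
      ≤ ∑ _ij ∈ (Finset.univ.filter fun ij : Fin (Φ.N (k + 1)) × Fin (Φ.N k) =>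
        Φ.A k ij.1 ij.2 ≠ 0), c := Finset.sum_le_sum fun ij _ => hA ij.1 ij.2
    _ = (Finset.univ.filter fun ij : Fin (Φ.N (k + 1)) × Fin (Φ.N k) =>
        Φ.A k ij.1 ij.2 ≠ 0).card * c := by rw [Finset.sum_const, nsmul_eq_mul]
    _ ≤ n * c := by
        exact mul_le_mul_of_nonneg_right (by exact_mod_cast hcard) hc
    _ = c * n := mul_comm _ _

lemma rowBound_le (Φ : NeuralNet d) (hd : 0 < d) (n : ℕ) (hn : 1 ≤ n)
    (hW : Φ.weightCount ≤ n) (c : ℝ) (hc : 1 ≤ c)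
    (hA : ∀ ℓ < Φ.L, ∀ i j, |Φ.A ℓ i j| ≤ c) :
    ∀ k, k ≤ Φ.L → ∀ i, Φ.rowBound k i ≤ (d : ℝ) * c ^ k * (n : ℝ) ^ (k / 2) := by
  have hc0 : (0 : ℝ) ≤ c := zero_le_one.trans hc
  have hn0 : (1 : ℝ) ≤ (n : ℝ) := by exact_mod_cast hn
  have hd1 : (1 : ℝ) ≤ (d : ℝ) := by exact_mod_cast hd
  intro k
  induction k using Nat.strong_induction_on with
  | _ k ih =>
    match k with
    | 0 =>
      intro _ i
      simpa [rowBound] using hd1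
    | 1 =>
      intro hk i
      have h0 : 0 < Φ.L := hk
      have : Φ.rowBound 1 i = ∑ j, |Φ.A 0 i j| := by
        simp [rowBound]
      rw [this]
      have hNd : Φ.N 0 = d := Φ.hN0
      calc ∑ j, |Φ.A 0 i j| ≤ ∑ _j : Fin (Φ.N 0), c :=
            Finset.sum_le_sum fun j _ => hA 0 h0 i j
        _ = (Φ.N 0 : ℝ) * c := by rw [Finset.sum_const, nsmul_eq_mul]; simp
        _ = (d : ℝ) * c ^ 1 * (n : ℝ) ^ (1 / 2) := by rw [hNd]; norm_num
    | (k + 2) =>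
      intro hk i
      have hk1 : k + 1 < Φ.L := lt_of_lt_of_le (Nat.lt_succ_self _) hk
      have hkk : k < Φ.L := lt_trans (Nat.lt_succ_self _) hk1
      have hIH : ∀ j, Φ.rowBound k j ≤ (d : ℝ) * c ^ k * (n : ℝ) ^ (k / 2) :=
        ih k (by omega) (le_of_lt hkk)
      set B : ℝ := (d : ℝ) * c ^ k * (n : ℝ) ^ (k / 2) with hB
      have hB0 : 0 ≤ B := by positivity
      have step1 : ∀ j, Φ.rowBound (k + 1) j ≤ (∑ l, |Φ.A k j l|) * B := by
        intro j
        show (∑ l, |Φ.A k j l| * Φ.rowBound k l) ≤ _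
        rw [Finset.sum_mul]
        exact Finset.sum_le_sum fun l _ =>
          mul_le_mul_of_nonneg_left (hIH l) (abs_nonneg _)
      have hsum : ∑ j, ∑ l, |Φ.A k j l| ≤ c * n :=
        Φ.abs_sum_A_le n hW c hc0 k hkk (hA k hkk)
      have step2 : Φ.rowBound (k + 2) i ≤ c * ((∑ j, ∑ l, |Φ.A k j l|) * B) := by
        show (∑ j, |Φ.A (k + 1) i j| * Φ.rowBound (k + 1) j) ≤ _
        rw [Finset.sum_mul, Finset.mul_sum]
        refine Finset.sum_le_sum fun j _ => ?_
        calc |Φ.A (k + 1) i j| * Φ.rowBound (k + 1) j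
            ≤ c * Φ.rowBound (k + 1) j :=
              mul_le_mul_of_nonneg_right (hA (k + 1) hk1 i j) (Φ.rowBound_nonneg _ j)
          _ ≤ c * ((∑ l, |Φ.A k j l|) * B) :=
              mul_le_mul_of_nonneg_left (step1 j) hc0
      have step3 : Φ.rowBound (k + 2) i ≤ c * ((c * n) * B) := by
        refine step2.trans ?_
        exact mul_le_mul_of_nonneg_left (mul_le_mul_of_nonneg_right hsum hB0) hc0
      refine step3.trans (le_of_eq ?_)
      have hdiv : (k + 2) / 2 = k / 2 + 1 := by omega
      rw [hdiv, hB]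
      ring

end NeuralNet

end LipAux
/-- Lemma 3.3 / `lem:NetworkLipschitzEstimate`: if `L := ℓ(n)` and
`C := c(n)` are finite, then every `F ∈ Σ_n` satisfies `Lip(F) ≤ d·C^L·n^{⌊L/2⌋}`
(Lipschitz constant with respect to the `ℓ∞` norm on `[0,1]^d`). -/
theorem network_lipschitz_estimate
    (d : ℕ) (hd : 0 < d) (ℓf : ℕ → ℕ∞) (cf : ℕ → ℝ≥0∞)
    (hℓ2 : ∀ k, 2 ≤ ℓf k) (hc1 : ∀ k, 1 ≤ cf k)
    (n : ℕ) (hn : 1 ≤ n)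
    (L : ℕ) (hL : ℓf n = (L : ℕ∞))
    (C : ℝ≥0∞) (hC : cf n = C) (hCfin : C < ⊤) :
    ∀ F ∈ NNSet d ℓf cf n,
      eLip d 1 F ≤ (d : ℝ≥0∞) * C ^ L * (n : ℝ≥0∞) ^ (L / 2) := by
  rintro F ⟨Φ, rfl, hW, hLle, hbd⟩
  set c : ℝ := C.toReal with hc
  have hCne : C ≠ ⊤ := hCfin.ne
  have hc1' : (1 : ℝ) ≤ c := by
    have := ENNReal.toReal_mono hCne (hC ▸ hc1 n)
    simpa using this
  have hc0 : (0 : ℝ) ≤ c := zero_le_one.trans hc1'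
  have hA : ∀ ℓ < Φ.L, ∀ i j, |Φ.A ℓ i j| ≤ c := by
    intro ℓ hℓ i j
    have h := ((hbd ℓ hℓ).1 i j)
    rw [hC] at h
    exact (ENNReal.ofReal_le_iff_le_toReal hCne).1 h
  have hΦL : Φ.L ≤ L := by
    rw [hL] at hLle
    exact_mod_cast hLle
  have hn1 : (1 : ℝ) ≤ (n : ℝ) := by exact_mod_cast hn
  set K : ℝ := (d : ℝ) * c ^ L * (n : ℝ) ^ (L / 2) with hK
  have hrb : ∀ k, k = Φ.L → ∀ i : Fin (Φ.N k), Φ.rowBound k i ≤ K := by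
    rintro k rfl i
    refine (Φ.rowBound_le hd n hn hW c hc1' hA Φ.L le_rfl i).trans ?_
    rw [hK]
    have h1 : c ^ Φ.L ≤ c ^ L := pow_le_pow_right₀ hc1' hΦL
    have h2 : (n : ℝ) ^ (Φ.L / 2) ≤ (n : ℝ) ^ (L / 2) :=
      pow_le_pow_right₀ hn1 (Nat.div_le_div_right hΦL)
    have hd0 : (0 : ℝ) ≤ (d : ℝ) := Nat.cast_nonneg d
    calc (d : ℝ) * c ^ Φ.L * (n : ℝ) ^ (Φ.L / 2)
        ≤ (d : ℝ) * c ^ L * (n : ℝ) ^ (Φ.L / 2) := by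
          exact mul_le_mul_of_nonneg_right (mul_le_mul_of_nonneg_left h1 hd0)
            (by positivity)
      _ ≤ (d : ℝ) * c ^ L * (n : ℝ) ^ (L / 2) :=
          mul_le_mul_of_nonneg_left h2 (by positivity)
  have hLip : ∀ x y : Fin d → ℝ, |Φ.realization x - Φ.realization y| ≤ K * dist x y := by
    intro x y
    have hidx : |Φ.realization x - Φ.realization y| ≤
        Φ.rowBound (Φ.L - 1 + 1)
          (Fin.cast (show (1 : ℕ) = Φ.N (Φ.L - 1 + 1) by
            rw [Nat.sub_add_cancel Φ.hL, Φ.hNL]) 0) * dist x y := by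
      unfold NeuralNet.realization
      rw [Pi.add_apply, Pi.add_apply, add_sub_add_right_eq_sub]
      exact Φ.mulVec_diff_le x y (Φ.L - 1) (Φ.hidden_lipschitz x y (Φ.L - 1)) _
    refine hidx.trans ?_
    exact mul_le_mul_of_nonneg_right
      (hrb (Φ.L - 1 + 1) (Nat.sub_add_cancel Φ.hL) _) dist_nonneg
  -- now bound eLip
  have hRHS : ENNReal.ofReal K = (d : ℝ≥0∞) * C ^ L * (n : ℝ≥0∞) ^ (L / 2) := by
    rw [hK, ENNReal.ofReal_mul (by positivity), ENNReal.ofReal_mul (Nat.cast_nonneg d),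
      ENNReal.ofReal_pow hc0, ENNReal.ofReal_pow (Nat.cast_nonneg n),
      ENNReal.ofReal_natCast, ENNReal.ofReal_natCast, ENNReal.ofReal_toReal hCne]
  rw [← hRHS]
  unfold eLip
  refine iSup₂_le fun x _ => iSup₂_le fun y _ => iSup_le fun hxy => ?_
  rw [Real.rpow_one]
  refine ENNReal.ofReal_le_ofReal ?_
  have hdist : 0 < dist x y := dist_pos.2 hxy
  rw [div_le_iff₀ hdist]
  exact hLip x y
end
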